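/- Let A and B be sparse subsets of [n-1]. The number of 123-avoiding permutations π of [n] with B ⊆ Asc(π) and A ⊆ Asc(π^{-1}) equals the Catalan number C_{n - |A| - |B|}. -/

import Mathlib

open Finset

section RankUtils
lemma filter_subset_filter_of_imp {β : Type*} [DecidableEq β] {T : Finset β} {p q : β → Prop}
    [DecidablePred p] [DecidablePred q] (h : ∀ z ∈ T, p z → q z) :
    T.filter p ⊆ T.filter q := by
  intro z hz
  rcases Finset.mem_filter.1 hz with ⟨h1, h2⟩
  exact Finset.mem_filter.2 ⟨h1, h z h1 h2⟩


variable {α : Type*} [LinearOrder α] [DecidableEq α]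

lemma filter_eq_image_orderEmbOfFin (T : Finset α) {k : ℕ} (hk : T.card = k)
    (p : α → Prop) [DecidablePred p] :
    T.filter p = (Finset.univ.filter fun i => p (T.orderEmbOfFin hk i)).image
      (T.orderEmbOfFin hk) := by
  ext x
  simp only [mem_filter, mem_image, mem_univ, true_and]
  constructor
  · rintro ⟨hx, hp⟩
    have : x ∈ Set.range (T.orderEmbOfFin hk) := by
      rw [Finset.range_orderEmbOfFin]; exact hx
    obtain ⟨i, rfl⟩ := this
    exact ⟨i, hp, rfl⟩
  · rintro ⟨i, hp, rfl⟩
    exact ⟨Finset.orderEmbOfFin_mem T hk i, hp⟩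

lemma card_filter_le_orderEmbOfFin (T : Finset α) {k : ℕ} (hk : T.card = k) (i : Fin k) :
    (T.filter fun x => T.orderEmbOfFin hk i ≤ x).card = k - i := by
  rw [filter_eq_image_orderEmbOfFin T hk]
  rw [Finset.card_image_of_injective _ (T.orderEmbOfFin hk).injective]
  have : (Finset.univ.filter fun j : Fin k => T.orderEmbOfFin hk i ≤ T.orderEmbOfFin hk j)
      = Finset.Ici i := by
    ext j
    simp only [Finset.mem_filter, Finset.mem_univ, true_and, Finset.mem_Ici,
      (T.orderEmbOfFin hk).le_iff_le]
  rw [this, Fin.card_Ici]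

lemma card_filter_lt_orderEmbOfFin (T : Finset α) {k : ℕ} (hk : T.card = k) (i : Fin k) :
    (T.filter fun x => x < T.orderEmbOfFin hk i).card = i := by
  rw [filter_eq_image_orderEmbOfFin T hk]
  rw [Finset.card_image_of_injective _ (T.orderEmbOfFin hk).injective]
  have : (Finset.univ.filter fun j : Fin k => T.orderEmbOfFin hk j < T.orderEmbOfFin hk i)
      = Finset.Iio i := by
    ext j
    simp only [Finset.mem_filter, Finset.mem_univ, true_and, Finset.mem_Iio,
      (T.orderEmbOfFin hk).lt_iff_lt]
  rw [this, Fin.card_Iio]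

lemma eq_of_card_filter_le_eq {T : Finset α} {x y : α} (hx : x ∈ T) (hy : y ∈ T)
    (h : (T.filter fun z => x ≤ z).card = (T.filter fun z => y ≤ z).card) : x = y := by
  by_contra hne
  rcases lt_or_gt_of_ne hne with hlt | hlt
  · have hss : (T.filter fun z => y ≤ z) ⊂ (T.filter fun z => x ≤ z) := by
      refine ⟨filter_subset_filter_of_imp (fun z _ hz => le_trans hlt.le hz), fun hsub => ?_⟩
      have := hsub (Finset.mem_filter.2 ⟨hx, le_refl x⟩)
      exact absurd (Finset.mem_filter.1 this).2 (not_le.2 hlt)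
    exact absurd (Finset.card_lt_card hss) (by omega)
  · have hss : (T.filter fun z => x ≤ z) ⊂ (T.filter fun z => y ≤ z) := by
      refine ⟨filter_subset_filter_of_imp (fun z _ hz => le_trans hlt.le hz), fun hsub => ?_⟩
      have := hsub (Finset.mem_filter.2 ⟨hy, le_refl y⟩)
      exact absurd (Finset.mem_filter.1 this).2 (not_le.2 hlt)
    exact absurd (Finset.card_lt_card hss) (by omega)

lemma eq_of_card_filter_lt_eq {T : Finset α} {x y : α} (hx : x ∈ T) (hy : y ∈ T)
    (h : (T.filter fun z => z < x).card = (T.filter fun z => z < y).card) : x = y := by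
  by_contra hne
  rcases lt_or_gt_of_ne hne with hlt | hlt
  · have hss : (T.filter fun z => z < x) ⊂ (T.filter fun z => z < y) := by
      refine ⟨filter_subset_filter_of_imp (fun z _ hz => lt_trans hz hlt), fun hsub => ?_⟩
      have := hsub (Finset.mem_filter.2 ⟨hx, hlt⟩)
      exact absurd (Finset.mem_filter.1 this).2 (lt_irrefl x)
    exact absurd (Finset.card_lt_card hss) (by omega)
  · have hss : (T.filter fun z => z < y) ⊂ (T.filter fun z => z < x) := by
      refine ⟨filter_subset_filter_of_imp (fun z _ hz => lt_trans hz hlt), fun hsub => ?_⟩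
      have := hsub (Finset.mem_filter.2 ⟨hy, hlt⟩)
      exact absurd (Finset.mem_filter.1 this).2 (lt_irrefl y)
    exact absurd (Finset.card_lt_card hss) (by omega)

/-- ascending enumeration recovery: the element of `T` with `i` elements below it. -/
lemma orderEmbOfFin_card_filter_lt {T : Finset α} {x : α} (hx : x ∈ T) :
    T.orderEmbOfFin rfl ⟨(T.filter fun z => z < x).card,
      Finset.card_lt_card ⟨Finset.filter_subset _ _,
        fun hsub => absurd (Finset.mem_filter.1 (hsub hx)).2 (lt_irrefl x)⟩⟩ = x := by
  apply eq_of_card_filter_lt_eq (Finset.orderEmbOfFin_mem _ _ _) hx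
  rw [card_filter_lt_orderEmbOfFin]

/-- the `i`-th largest element (0-based) of a finset. -/
def dsc (T : Finset α) (i : ℕ) (h : i < T.card) : α :=
  T.orderEmbOfFin rfl ⟨T.card - 1 - i, by omega⟩

lemma dsc_mem (T : Finset α) (i : ℕ) (h : i < T.card) : dsc T i h ∈ T :=
  Finset.orderEmbOfFin_mem _ _ _

lemma card_filter_le_dsc (T : Finset α) (i : ℕ) (h : i < T.card) :
    (T.filter fun x => dsc T i h ≤ x).card = i + 1 := by
  rw [dsc, card_filter_le_orderEmbOfFin]
  simp only []
  omega

lemma le_dsc_iff {T : Finset α} {i : ℕ} {h : i < T.card} {c : α} :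
    c ≤ dsc T i h ↔ i < (T.filter fun x => c ≤ x).card := by
  constructor
  · intro hc
    have hsub : (T.filter fun x => dsc T i h ≤ x) ⊆ (T.filter fun x => c ≤ x) :=
      filter_subset_filter_of_imp (fun z _ hz => le_trans hc hz)
    have := Finset.card_le_card hsub
    rw [card_filter_le_dsc] at this
    omega
  · intro hc
    by_contra hlt
    rw [not_le] at hlt
    have hsub : (T.filter fun x => c ≤ x) ⊆ (T.filter fun x => dsc T i h ≤ x).erase (dsc T i h) := by
      intro z hz
      rcases Finset.mem_filter.1 hz with ⟨hzT, hcz⟩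
      refine Finset.mem_erase.2 ⟨?_, Finset.mem_filter.2 ⟨hzT, le_trans hlt.le hcz⟩⟩
      intro hzd
      rw [hzd] at hcz
      exact absurd hlt (not_lt.2 hcz)
    have := Finset.card_le_card hsub
    rw [Finset.card_erase_of_mem (Finset.mem_filter.2 ⟨dsc_mem T i h, le_refl _⟩),
      card_filter_le_dsc] at this
    omega

lemma dsc_lt_iff {T : Finset α} {i : ℕ} {h : i < T.card} {c : α} :
    dsc T i h < c ↔ (T.filter fun x => c ≤ x).card ≤ i := by
  rw [← not_le, le_dsc_iff, not_lt]

lemma dsc_lt_dsc {T : Finset α} {i j : ℕ} (hij : i < j) (hj : j < T.card) :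
    dsc T j hj < dsc T i (lt_trans hij hj) := by
  apply (T.orderEmbOfFin rfl).strictMono
  simp only [Fin.mk_lt_mk]
  omega

lemma eq_dsc {T : Finset α} {x : α} {i : ℕ} (hx : x ∈ T)
    (hc : (T.filter fun y => x ≤ y).card = i + 1) (h : i < T.card) : dsc T i h = x := by
  apply eq_of_card_filter_le_eq (dsc_mem T i h) hx
  rw [card_filter_le_dsc, hc]

end RankUtils

open Finset DyckStep List

section WordFinset

/-- helper: cardinality of prefix filter grows by indicator -/
lemma card_filter_lt_succ (S : Finset ℕ) (t : ℕ) :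
    (S.filter (· < t + 1)).card = (S.filter (· < t)).card + (if t ∈ S then 1 else 0) := by
  have hsplit : S.filter (· < t + 1) = S.filter (· < t) ∪ S.filter (· = t) := by
    rw [← Finset.filter_or]
    apply Finset.filter_congr
    intro x _
    simp only [Nat.lt_succ_iff_lt_or_eq]
  rw [hsplit, Finset.card_union_of_disjoint]
  · rw [Finset.filter_eq']
    split <;> simp
  · simp only [Finset.disjoint_filter]
    intro x _ hlt heq
    omega

/-- The Finset-encoded Dyck condition. -/
def IsDyckS (n : ℕ) (S : Finset ℕ) : Prop :=
  S ⊆ Finset.range (2 * n) ∧ S.card = n ∧ ∀ t ≤ 2 * n, t ≤ 2 * (S.filter (· < t)).card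

/-- the word of a Finset -/
def listOfS (m : ℕ) (S : Finset ℕ) : List DyckStep :=
  (List.range (2 * m)).map (fun i => if i ∈ S then U else D)

lemma listOfS_length (m : ℕ) (S : Finset ℕ) : (listOfS m S).length = 2 * m := by
  simp [listOfS]

lemma listOfS_take_count_U (m : ℕ) (S : Finset ℕ) {t : ℕ} (ht : t ≤ 2 * m) :
    ((listOfS m S).take t).count U = (S.filter (· < t)).card := by
  have htake : (listOfS m S).take t = (List.range t).map (fun i => if i ∈ S then U else D) := by
    rw [listOfS, ← List.map_take, List.take_range, min_eq_left ht]
  rw [htake]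
  clear htake ht
  induction t with
  | zero => simp
  | succ t ih =>
    rw [List.range_succ, List.map_append, List.count_append, ih, card_filter_lt_succ]
    simp only [List.map_cons, List.map_nil, List.count_cons, List.count_nil]
    split <;> simp

lemma listOfS_take_count_D (m : ℕ) (S : Finset ℕ) {t : ℕ} (ht : t ≤ 2 * m) :
    ((listOfS m S).take t).count D = t - (S.filter (· < t)).card := by
  have htake : (listOfS m S).take t = (List.range t).map (fun i => if i ∈ S then U else D) := by
    rw [listOfS, ← List.map_take, List.take_range, min_eq_left ht]
  rw [htake]
  clear htake ht
  induction t with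
  | zero => simp
  | succ t ih =>
    rw [List.range_succ, List.map_append, List.count_append, ih, card_filter_lt_succ]
    simp only [List.map_cons, List.map_nil, List.count_cons, List.count_nil]
    have hb : (S.filter (· < t)).card ≤ t := by
      have := Finset.card_filter_le S (· < t)
      have h2 : (S.filter (· < t)).card ≤ (Finset.range t).card := by
        apply Finset.card_le_card
        intro x hx
        rcases Finset.mem_filter.1 hx with ⟨_, h⟩
        exact Finset.mem_range.2 h
      simpa using h2
    split <;> simp <;> omega

lemma take_succ_getD {β : Type*} (l : List β) (t : ℕ) (h : t < l.length) (d : β) :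
    l.take (t + 1) = l.take t ++ [l.getD t d] := by
  rw [List.getD_eq_getElem _ _ h, ← List.take_concat_get' _ _ h]

lemma count_U_add_count_D (l : List DyckStep) : l.count U + l.count D = l.length := by
  induction l with
  | nil => simp
  | cons a l ih =>
    cases a <;> simp [List.count_cons, ← ih] <;> omega

/-- Dyck word from a valid Finset -/
def dyckOfS (m : ℕ) (S : Finset ℕ) (h : IsDyckS m S) : DyckWord where
  toList := listOfS m S
  count_U_eq_count_D := by
    obtain ⟨hsub, hcard, _⟩ := h
    have hS : S.filter (· < 2 * m) = S := by
      apply Finset.filter_true_of_mem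
      intro x hx
      exact Finset.mem_range.1 (hsub hx)
    have h1 : (listOfS m S).count U = m := by
      have := listOfS_take_count_U m S (le_refl (2 * m))
      rwa [List.take_of_length_le (by rw [listOfS_length]), hS, hcard] at this
    have h2 : (listOfS m S).count D = m := by
      have := listOfS_take_count_D m S (le_refl (2 * m))
      rw [List.take_of_length_le (by rw [listOfS_length]), hS, hcard] at this
      omega
    rw [h1, h2]
  count_D_le_count_U i := by
    obtain ⟨hsub, hcard, hpre⟩ := h
    rcases le_or_gt i (2 * m) with hi | hi
    · rw [listOfS_take_count_U m S hi, listOfS_take_count_D m S hi]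
      have := hpre i hi
      omega
    · rw [List.take_of_length_le (by rw [listOfS_length]; omega)]
      have h1 := listOfS_take_count_U m S (le_refl (2 * m))
      have h2 := listOfS_take_count_D m S (le_refl (2 * m))
      rw [List.take_of_length_le (by rw [listOfS_length])] at h1 h2
      have := hpre (2 * m) (le_refl _)
      omega

lemma dyckOfS_semilength (m : ℕ) (S : Finset ℕ) (h : IsDyckS m S) :
    (dyckOfS m S h).semilength = m := by
  obtain ⟨hsub, hcard, _⟩ := h
  have hS : S.filter (· < 2 * m) = S := by
    apply Finset.filter_true_of_mem
    intro x hx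
    exact Finset.mem_range.1 (hsub hx)
  show (listOfS m S).count U = m
  have := listOfS_take_count_U m S (le_refl (2 * m))
  rwa [List.take_of_length_le (by rw [listOfS_length]), hS, hcard] at this

/-- Finset from a Dyck word -/
def sOfDyck (m : ℕ) (p : DyckWord) : Finset ℕ :=
  (Finset.range (2 * m)).filter (fun i => p.toList.getD i D = U)

lemma getD_listOfS (m : ℕ) (S : Finset ℕ) {i : ℕ} (hi : i < 2 * m) :
    (listOfS m S).getD i D = if i ∈ S then U else D := by
  rw [List.getD_eq_getElem _ _ (by rw [listOfS_length]; exact hi)]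
  simp [listOfS]

lemma sOfDyck_filter_lt (m : ℕ) (p : DyckWord) (hp : p.semilength = m) {t : ℕ} (ht : t ≤ 2 * m) :
    ((sOfDyck m p).filter (· < t)).card = (p.toList.take t).count U := by
  have hlen : p.toList.length = 2 * m := by
    rw [← DyckWord.two_mul_semilength_eq_length, hp]
  have : (sOfDyck m p).filter (· < t) = (Finset.range t).filter (fun i => p.toList.getD i D = U) := by
    ext x
    simp only [sOfDyck, Finset.mem_filter, Finset.mem_range]
    constructor
    · rintro ⟨⟨h1, h2⟩, h3⟩; exact ⟨h3, h2⟩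
    · rintro ⟨h1, h2⟩; exact ⟨⟨by omega, h2⟩, h1⟩
  rw [this]
  clear this
  induction t with
  | zero => simp
  | succ t ih =>
    have ht' : t ≤ 2 * m := by omega
    rw [Finset.range_add_one, Finset.filter_insert]
    rw [take_succ_getD p.toList t (by omega) D, List.count_append]
    rcases (p.toList.getD t D).dichotomy with hU | hU
    · rw [if_pos hU, Finset.card_insert_of_notMem (by simp), ih ht', hU]
      simp
    · rw [if_neg (by rw [hU]; simp), ih ht', hU]
      simp

lemma sOfDyck_isDyckS (m : ℕ) (p : DyckWord) (hp : p.semilength = m) :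
    IsDyckS m (sOfDyck m p) := by
  have hlen : p.toList.length = 2 * m := by
    rw [← DyckWord.two_mul_semilength_eq_length, hp]
  refine ⟨Finset.filter_subset _ _, ?_, ?_⟩
  · have := sOfDyck_filter_lt m p hp (le_refl (2 * m))
    rw [List.take_of_length_le (by omega)] at this
    have hall : (sOfDyck m p).filter (· < 2 * m) = sOfDyck m p := by
      apply Finset.filter_true_of_mem
      intro x hx
      exact Finset.mem_range.1 (Finset.mem_filter.1 hx).1
    rw [hall] at this
    rw [this, ← hp]
    rfl
  · intro t ht
    rw [sOfDyck_filter_lt m p hp ht]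
    have h1 := p.count_D_le_count_U t
    have h2 := count_U_add_count_D (p.toList.take t)
    rw [List.length_take, min_eq_left (by omega)] at h2
    omega

/-- The equivalence between Finset-encoded Dyck words and `DyckWord`s. -/
def equivDyck (m : ℕ) : {S : Finset ℕ // IsDyckS m S} ≃ {p : DyckWord // p.semilength = m} where
  toFun := fun ⟨S, h⟩ => ⟨dyckOfS m S h, dyckOfS_semilength m S h⟩
  invFun := fun ⟨p, hp⟩ => ⟨sOfDyck m p, sOfDyck_isDyckS m p hp⟩
  left_inv := by
    rintro ⟨S, h⟩
    apply Subtype.ext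
    show sOfDyck m (dyckOfS m S h) = S
    have hcoe : (dyckOfS m S h).toList = listOfS m S := rfl
    ext x
    simp only [sOfDyck, hcoe, Finset.mem_filter, Finset.mem_range]
    constructor
    · rintro ⟨h1, h2⟩
      rw [getD_listOfS m S h1] at h2
      by_cases hx : x ∈ S
      · exact hx
      · rw [if_neg hx] at h2; exact absurd h2 (by simp)
    · intro hx
      have h1 : x < 2 * m := Finset.mem_range.1 (h.1 hx)
      refine ⟨h1, ?_⟩
      rw [getD_listOfS m S h1, if_pos hx]
  right_inv := by
    rintro ⟨p, hp⟩
    have hlen : p.toList.length = 2 * m := by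
      rw [← DyckWord.two_mul_semilength_eq_length, hp]
    apply Subtype.ext
    apply DyckWord.ext
    show listOfS m (sOfDyck m p) = p.toList
    apply List.ext_getElem
    · rw [listOfS_length]; omega
    · intro i h1 h2
      rw [listOfS_length] at h1
      show (listOfS m (sOfDyck m p))[i]'(by rw [listOfS_length]; omega) = _
      have : (listOfS m (sOfDyck m p))[i]'(by rw [listOfS_length]; omega)
          = (listOfS m (sOfDyck m p)).getD i D := (List.getD_eq_getElem _ _ _).symm
      rw [this, getD_listOfS m _ h1]
      simp only [sOfDyck, Finset.mem_filter, Finset.mem_range]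
      have hgetD : p.toList.getD i D = p.toList[i]'h2 := List.getD_eq_getElem _ _ _
      rcases (p.toList[i]'h2).dichotomy with hU | hD
      · rw [if_pos ⟨h1, by rw [hgetD, hU]⟩, hU]
      · rw [if_neg ?_, hD]
        · rintro ⟨-, hc⟩
          rw [hgetD, hD] at hc
          exact absurd hc (by simp)

end WordFinset

section Contraction

variable (n : ℕ) (Q : Finset ℕ)

/-- positions deleted because they are forced `D` -/
def Qup : Finset ℕ := Q.image (· + 2)

/-- remaining (free) positions -/
def Rfree : Finset ℕ := (Finset.range (2 * n)) \ (Q ∪ Qup Q)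

/-- contraction rank -/
def crank (x : ℕ) : ℕ := ((Rfree n Q).filter (· < x)).card

/-- enumeration of free positions -/
def nuMap (i : ℕ) : ℕ :=
  if h : i < (Rfree n Q).card then (Rfree n Q).orderEmbOfFin rfl ⟨i, h⟩ else 2 * n

variable {n Q}
variable (hQ2 : ∀ q ∈ Q, q + 2 < 2 * n) (hQsep : ∀ q ∈ Q, q + 2 ∉ Q)

include hQsep in
lemma Q_disj_Qup : Disjoint Q (Qup Q) := by
  rw [Finset.disjoint_right]
  intro x hx hx'
  rcases Finset.mem_image.1 hx with ⟨q, hq, rfl⟩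
  exact hQsep q hq hx'

include hQ2 hQsep in
lemma card_Q_union_Qup : (Q ∪ Qup Q).card = 2 * Q.card := by
  rw [Finset.card_union_of_disjoint (Q_disj_Qup hQsep), Qup,
    Finset.card_image_of_injective _ (add_left_injective 2)]
  omega

include hQ2 in
lemma Q_union_Qup_subset : (Q ∪ Qup Q) ⊆ Finset.range (2 * n) := by
  intro x hx
  rcases Finset.mem_union.1 hx with h | h
  · exact Finset.mem_range.2 (by have := hQ2 x h; omega)
  · rcases Finset.mem_image.1 h with ⟨q, hq, rfl⟩
    exact Finset.mem_range.2 (hQ2 q hq)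

include hQ2 hQsep in
lemma card_Rfree : (Rfree n Q).card = 2 * n - 2 * Q.card := by
  rw [Rfree, Finset.card_sdiff_of_subset (Q_union_Qup_subset hQ2), Finset.card_range,
    card_Q_union_Qup hQ2 hQsep]

include hQ2 hQsep in
lemma Qcard_le : Q.card ≤ n := by
  have h1 := Finset.card_le_card (Q_union_Qup_subset (n := n) hQ2)
  rw [card_Q_union_Qup hQ2 hQsep, Finset.card_range] at h1
  omega

lemma nuMap_mem {i : ℕ} (h : i < (Rfree n Q).card) : nuMap n Q i ∈ Rfree n Q := by
  rw [nuMap, dif_pos h]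
  exact Finset.orderEmbOfFin_mem _ _ _

lemma crank_nuMap {i : ℕ} (h : i < (Rfree n Q).card) : crank n Q (nuMap n Q i) = i := by
  rw [nuMap, dif_pos h, crank]
  exact card_filter_lt_orderEmbOfFin _ rfl _

lemma nuMap_crank {x : ℕ} (hx : x ∈ Rfree n Q) : nuMap n Q (crank n Q x) = x := by
  have hlt : crank n Q x < (Rfree n Q).card := by
    apply Finset.card_lt_card
    refine ⟨Finset.filter_subset _ _, fun hsub => ?_⟩
    exact absurd (Finset.mem_filter.1 (hsub hx)).2 (lt_irrefl x)
  rw [nuMap, dif_pos hlt]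
  exact orderEmbOfFin_card_filter_lt hx

lemma crank_lt_card {x : ℕ} (hx : x ∈ Rfree n Q) : crank n Q x < (Rfree n Q).card := by
  apply Finset.card_lt_card
  refine ⟨Finset.filter_subset _ _, fun hsub => ?_⟩
  exact absurd (Finset.mem_filter.1 (hsub hx)).2 (lt_irrefl x)

lemma crank_strict {x t : ℕ} (hx : x ∈ Rfree n Q) (hxt : x < t) :
    crank n Q x < crank n Q t := by
  apply Finset.card_lt_card
  constructor
  · exact filter_subset_filter_of_imp (fun z _ hz => lt_trans hz hxt)
  · intro hsub
    have := (Finset.mem_filter.1 (hsub (Finset.mem_filter.2 ⟨hx, hxt⟩))).2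
    omega

lemma nuMap_lt_of_lt_crank {i t : ℕ} (hi : i < (Rfree n Q).card) (h : i < crank n Q t) :
    nuMap n Q i < t := by
  by_contra hge
  rw [not_lt] at hge
  have hsub : (Rfree n Q).filter (· < t) ⊆ (Rfree n Q).filter (· < nuMap n Q i) :=
    filter_subset_filter_of_imp (fun z _ hz => lt_of_lt_of_le hz hge)
  have := Finset.card_le_card hsub
  rw [show ((Rfree n Q).filter (· < nuMap n Q i)).card = crank n Q (nuMap n Q i) from rfl,
    crank_nuMap hi] at this
  have : crank n Q t ≤ i := this
  omega

include hQsep in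
/-- partition of a prefix of `range (2n)` -/
lemma prefix_partition (t : ℕ) (ht : t ≤ 2 * n) :
    t = (Q.filter (· < t)).card + ((Qup Q).filter (· < t)).card
      + ((Rfree n Q).filter (· < t)).card := by
  have hsplit : Finset.range t
      = (Q.filter (· < t)) ∪ ((Qup Q).filter (· < t)) ∪ ((Rfree n Q).filter (· < t)) := by
    ext x
    simp only [Finset.mem_range, Finset.mem_union, Finset.mem_filter]
    constructor
    · intro hx
      by_cases h1 : x ∈ Q
      · exact Or.inl (Or.inl ⟨h1, hx⟩)
      · by_cases h2 : x ∈ Qup Q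
        · exact Or.inl (Or.inr ⟨h2, hx⟩)
        · refine Or.inr ⟨?_, hx⟩
          rw [Rfree, Finset.mem_sdiff]
          exact ⟨Finset.mem_range.2 (by omega), by
            rw [Finset.mem_union]; tauto⟩
    · rintro ((⟨_, h⟩ | ⟨_, h⟩) | ⟨_, h⟩) <;> exact h
  have hd1 : Disjoint (Q.filter (· < t)) ((Qup Q).filter (· < t)) :=
    Finset.disjoint_filter_filter (Q_disj_Qup hQsep)
  have hd2 : Disjoint ((Q.filter (· < t)) ∪ ((Qup Q).filter (· < t)))
      ((Rfree n Q).filter (· < t)) := by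
    rw [Finset.disjoint_right]
    intro x hx hx'
    rcases Finset.mem_filter.1 hx with ⟨hxR, -⟩
    rw [Rfree, Finset.mem_sdiff] at hxR
    rcases Finset.mem_union.1 hx' with h | h
    · exact hxR.2 (Finset.mem_union.2 (Or.inl (Finset.mem_filter.1 h).1))
    · exact hxR.2 (Finset.mem_union.2 (Or.inr (Finset.mem_filter.1 h).1))
  calc t = (Finset.range t).card := (Finset.card_range t).symm
    _ = _ := by
      rw [hsplit, Finset.card_union_of_disjoint hd2, Finset.card_union_of_disjoint hd1]

lemma Qup_filter_card (t : ℕ) :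
    ((Qup Q).filter (· < t)).card = (Q.filter (fun q => q + 2 < t)).card := by
  have : (Qup Q).filter (· < t) = (Q.filter (fun q => q + 2 < t)).image (· + 2) := by
    ext x
    simp only [Qup, Finset.mem_filter, Finset.mem_image]
    constructor
    · rintro ⟨⟨q, hq, rfl⟩, hlt⟩
      exact ⟨q, ⟨hq, hlt⟩, rfl⟩
    · rintro ⟨q, ⟨h1, h2⟩, rfl⟩
      exact ⟨⟨q, h1, rfl⟩, h2⟩
  rw [this, Finset.card_image_of_injective _ (add_left_injective 2)]

lemma Qup_filter_le (t : ℕ) : ((Qup Q).filter (· < t)).card ≤ (Q.filter (· < t)).card := by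
  rw [Qup_filter_card]
  exact Finset.card_le_card (filter_subset_filter_of_imp (fun q _ h => by omega))

end Contraction

section Contraction2

variable {n : ℕ} {Q : Finset ℕ} {S : Finset ℕ}
variable (hQ2 : ∀ q ∈ Q, q + 2 < 2 * n) (hQsep : ∀ q ∈ Q, q + 2 ∉ Q)
variable (hS : IsDyckS n S) (hQS : Q ⊆ S) (hQ2S : ∀ q ∈ Q, q + 2 ∉ S)

include hS hQS hQ2S in
/-- within a prefix, the forced-S positions of Q and the rest of S split -/
lemma S_prefix_split (t : ℕ) :
    (S.filter (· < t)).card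
      = (Q.filter (· < t)).card + (((S ∩ Rfree n Q)).filter (· < t)).card := by
  have hsplit : S.filter (· < t) = (Q.filter (· < t)) ∪ ((S ∩ Rfree n Q).filter (· < t)) := by
    ext x
    simp only [Finset.mem_filter, Finset.mem_union, Finset.mem_inter]
    constructor
    · rintro ⟨hxS, hxt⟩
      by_cases hxQ : x ∈ Q
      · exact Or.inl ⟨hxQ, hxt⟩
      · refine Or.inr ⟨⟨hxS, ?_⟩, hxt⟩
        rw [Rfree, Finset.mem_sdiff]
        refine ⟨Finset.mem_range.2 (Finset.mem_range.1 (hS.1 hxS)), ?_⟩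
        rw [Finset.mem_union]
        rintro (h | h)
        · exact hxQ h
        · rcases Finset.mem_image.1 h with ⟨q, hq, rfl⟩
          exact hQ2S q hq hxS
    · rintro (⟨h1, h2⟩ | ⟨⟨h1, -⟩, h2⟩)
      · exact ⟨hQS h1, h2⟩
      · exact ⟨h1, h2⟩
  have hd : Disjoint (Q.filter (· < t)) ((S ∩ Rfree n Q).filter (· < t)) := by
    rw [Finset.disjoint_right]
    intro x hx hx'
    rcases Finset.mem_filter.1 hx with ⟨hxm, -⟩
    rcases Finset.mem_inter.1 hxm with ⟨-, hxR⟩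
    rw [Rfree, Finset.mem_sdiff] at hxR
    exact hxR.2 (Finset.mem_union.2 (Or.inl (Finset.mem_filter.1 hx').1))
  rw [hsplit, Finset.card_union_of_disjoint hd]

include hQ2 hS hQS hQ2S in
/-- the master inequality: prefixes remain Dyck after deleting forced letters -/
lemma master_ineq (t : ℕ) (ht : t ≤ 2 * n) :
    t + (Q.filter (· < t)).card ≤ 2 * (S.filter (· < t)).card + ((Qup Q).filter (· < t)).card := by
  obtain ⟨hsub, hcard, hpre⟩ := hS
  -- split the Q-prefix count into the "far" part and the boundary part
  have hqsplit : (Q.filter (· < t)).card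
      = (Q.filter (fun q => q + 2 < t)).card + (Q.filter (fun q => q + 1 = t ∨ q + 2 = t)).card := by
    have hqeq : Q.filter (· < t)
        = Q.filter (fun q => q + 2 < t ∨ (q + 1 = t ∨ q + 2 = t)) := by
      apply Finset.filter_congr
      intro x _
      constructor
      · intro h; omega
      · intro h; omega
    rw [hqeq, Finset.filter_or, Finset.card_union_of_disjoint]
    simp only [Finset.disjoint_filter]
    intro x _ h1 h2
    omega
  rw [Qup_filter_card, hqsplit]
  rcases Nat.eq_zero_or_pos ((Q.filter (fun q => q + 1 = t ∨ q + 2 = t)).card) with hz | hpos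
  · rw [hz]
    have := hpre t ht
    omega
  -- boundary part is nonempty : analyze membership of t-1 and t-2 in Q
  · have hb1 : t ≥ 1 := by
      rcases Finset.card_pos.1 hpos with ⟨q, hq⟩
      rcases Finset.mem_filter.1 hq with ⟨-, h | h⟩ <;> omega
    by_cases hA : 1 ≤ t ∧ t - 1 ∈ Q
    · -- t-1 ∈ Q forces t-1 ∈ S
      by_cases hB : 2 ≤ t ∧ t - 2 ∈ Q
      · -- both
        obtain ⟨s, rfl⟩ : ∃ s, t = s + 2 := ⟨t - 2, by omega⟩
        have hset : Q.filter (fun q => q + 1 = s + 2 ∨ q + 2 = s + 2) = {s, s + 1} := by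
          ext x
          simp only [Finset.mem_filter, Finset.mem_insert, Finset.mem_singleton]
          constructor
          · rintro ⟨-, h | h⟩ <;> omega
          · rintro (rfl | rfl)
            · exact ⟨by simpa using hB.2, by omega⟩
            · exact ⟨by simpa using hA.2, by omega⟩
        rw [hset, Finset.card_insert_of_notMem (by simp), Finset.card_singleton]
        have hsS : s ∈ S := hQS (by simpa using hB.2)
        have hs1S : s + 1 ∈ S := hQS (by simpa using hA.2)
        have e1 := card_filter_lt_succ S (s + 1)
        rw [show s + 1 + 1 = s + 2 from rfl] at e1
        have e2 := card_filter_lt_succ S s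
        rw [if_pos hs1S] at e1
        rw [if_pos hsS] at e2
        have hd := hpre s (by omega)
        have hq2 : (Q.filter (fun q => q + 2 < s + 2)).card ≤ (Q.filter (· < s + 2)).card :=
          Finset.card_le_card (filter_subset_filter_of_imp (fun q _ h => by omega))
        omega
    -- only t-1
      · obtain ⟨s, rfl⟩ : ∃ s, t = s + 1 := ⟨t - 1, by omega⟩
        have hset : Q.filter (fun q => q + 1 = s + 1 ∨ q + 2 = s + 1) = {s} := by
          ext x
          simp only [Finset.mem_filter, Finset.mem_singleton]
          constructor
          · rintro ⟨hx, h | h⟩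
            · omega
            · exact absurd ⟨by omega, by rw [show s + 1 - 2 = x by omega]; exact hx⟩ hB
          · rintro rfl
            exact ⟨by simpa using hA.2, Or.inl rfl⟩
        rw [hset, Finset.card_singleton]
        have hsS : s ∈ S := hQS (by simpa using hA.2)
        have e1 := card_filter_lt_succ S s
        rw [if_pos hsS] at e1
        have hd := hpre s (by omega)
        omega
    · -- t-1 ∉ Q; boundary nonempty forces t ≥ 2 and t-2 ∈ Q
      have hB : 2 ≤ t ∧ t - 2 ∈ Q := by
        rcases Finset.card_pos.1 hpos with ⟨q, hq⟩
        rcases Finset.mem_filter.1 hq with ⟨hqQ, h | h⟩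
        · exact absurd ⟨by omega, by rw [show t - 1 = q by omega]; exact hqQ⟩ hA
        · exact ⟨by omega, by rw [show t - 2 = q by omega]; exact hqQ⟩
      obtain ⟨s, rfl⟩ : ∃ s, t = s + 2 := ⟨t - 2, by omega⟩
      have hset : Q.filter (fun q => q + 1 = s + 2 ∨ q + 2 = s + 2) = {s} := by
        ext x
        simp only [Finset.mem_filter, Finset.mem_singleton]
        constructor
        · rintro ⟨hx, h | h⟩
          · exfalso
            exact hA ⟨by omega, by rw [show s + 2 - 1 = x by omega]; exact hx⟩
          · omega
        · rintro rfl
          exact ⟨by simpa using hB.2, Or.inr rfl⟩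
      rw [hset, Finset.card_singleton]
      have hsS : s ∈ S := hQS (by simpa using hB.2)
      have e2 := card_filter_lt_succ S s
      rw [if_pos hsS] at e2
      have e1 := card_filter_lt_succ S (s + 1)
      rw [show s + 1 + 1 = s + 2 from rfl] at e1
      by_cases hs1 : s + 1 ∈ S
      · rw [if_pos hs1] at e1
        have hd := hpre s (by omega)
        have hq2 : (Q.filter (fun q => q + 2 < s + 2)).card ≤ (Q.filter (· < s + 2)).card :=
          Finset.card_le_card (filter_subset_filter_of_imp (fun q _ h => by omega))
        omega
      · rw [if_neg hs1] at e1
        -- here s+2 ∉ S since s ∈ Q, so the Dyck condition at s+3 gives the strict bound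
        have hs2 : s + 2 ∉ S := hQ2S s (by simpa using hB.2)
        have e3 := card_filter_lt_succ S (s + 2)
        rw [show s + 2 + 1 = s + 3 from rfl] at e3
        rw [if_neg hs2] at e3
        have hd := hpre (s + 3) (by have := hQ2 s (by simpa using hB.2); omega)
        omega
end Contraction2

section Contraction3

variable {n : ℕ} {Q : Finset ℕ}
variable (hQ2 : ∀ q ∈ Q, q + 2 < 2 * n) (hQsep : ∀ q ∈ Q, q + 2 ∉ Q)

/-- the contracted word -/
def contractS (n : ℕ) (Q S : Finset ℕ) : Finset ℕ :=
  (Finset.range (2 * (n - Q.card))).filter (fun i => nuMap n Q i ∈ S)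

/-- the expanded word -/
def expandS (n : ℕ) (Q S' : Finset ℕ) : Finset ℕ :=
  Q ∪ ((Rfree n Q).filter (fun x => crank n Q x ∈ S'))

include hQ2 hQsep in
lemma card_Rfree' : (Rfree n Q).card = 2 * (n - Q.card) := by
  have h1 := card_Rfree hQ2 hQsep
  have h2 := Qcard_le hQ2 hQsep
  omega

include hQ2 hQsep in
lemma crank_le_2m (t : ℕ) : crank n Q t ≤ 2 * (n - Q.card) := by
  rw [← card_Rfree' hQ2 hQsep]
  exact Finset.card_le_card (Finset.filter_subset _ _)

include hQ2 hQsep in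
lemma crank_total : crank n Q (2 * n) = 2 * (n - Q.card) := by
  rw [crank, Finset.filter_true_of_mem, card_Rfree' hQ2 hQsep]
  intro x hx
  rw [Rfree, Finset.mem_sdiff] at hx
  exact Finset.mem_range.1 hx.1

include hQ2 hQsep in
lemma contract_count {S : Finset ℕ} (t : ℕ) :
    ((contractS n Q S).filter (· < crank n Q t)).card
      = ((S ∩ Rfree n Q).filter (· < t)).card := by
  have hRc := card_Rfree' hQ2 hQsep
  apply Finset.card_bij (fun a _ => nuMap n Q a)
  · intro a ha
    rcases Finset.mem_filter.1 ha with ⟨ha1, ha2⟩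
    rcases Finset.mem_filter.1 ha1 with ⟨har, haS⟩
    have halt : a < (Rfree n Q).card := by rw [hRc]; exact Finset.mem_range.1 har
    refine Finset.mem_filter.2 ⟨Finset.mem_inter.2 ⟨haS, nuMap_mem halt⟩, ?_⟩
    exact nuMap_lt_of_lt_crank halt ha2
  · intro a1 ha1 a2 ha2 heq
    have h1 : a1 < (Rfree n Q).card := by
      rw [hRc]; exact Finset.mem_range.1 (Finset.mem_filter.1 (Finset.mem_filter.1 ha1).1).1
    have h2 : a2 < (Rfree n Q).card := by
      rw [hRc]; exact Finset.mem_range.1 (Finset.mem_filter.1 (Finset.mem_filter.1 ha2).1).1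
    rw [← crank_nuMap h1, ← crank_nuMap h2, heq]
  · intro b hb
    rcases Finset.mem_filter.1 hb with ⟨hb1, hb2⟩
    rcases Finset.mem_inter.1 hb1 with ⟨hbS, hbR⟩
    refine ⟨crank n Q b, ?_, ?_⟩
    · refine Finset.mem_filter.2 ⟨Finset.mem_filter.2 ⟨?_, ?_⟩, ?_⟩
      · exact Finset.mem_range.2 (by rw [← hRc]; exact crank_lt_card hbR)
      · rw [nuMap_crank hbR]; exact hbS
      · exact crank_strict hbR hb2
    · rw [nuMap_crank hbR]

lemma expand_count {S' : Finset ℕ} (t : ℕ) :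
    (((Rfree n Q).filter (fun x => crank n Q x ∈ S')).filter (· < t)).card
      = (S'.filter (· < crank n Q t)).card := by
  apply Finset.card_bij (fun x _ => crank n Q x)
  · intro x hx
    rcases Finset.mem_filter.1 hx with ⟨hx1, hx2⟩
    rcases Finset.mem_filter.1 hx1 with ⟨hxR, hxS⟩
    exact Finset.mem_filter.2 ⟨hxS, crank_strict hxR hx2⟩
  · intro a1 ha1 a2 ha2 heq
    have h1 := (Finset.mem_filter.1 (Finset.mem_filter.1 ha1).1).1
    have h2 := (Finset.mem_filter.1 (Finset.mem_filter.1 ha2).1).1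
    rw [← nuMap_crank h1, ← nuMap_crank h2, heq]
  · intro b hb
    rcases Finset.mem_filter.1 hb with ⟨hbS, hbt⟩
    have hblt : b < (Rfree n Q).card :=
      lt_of_lt_of_le hbt (Finset.card_le_card (Finset.filter_subset _ _))
    refine ⟨nuMap n Q b, ?_, ?_⟩
    · refine Finset.mem_filter.2 ⟨Finset.mem_filter.2 ⟨nuMap_mem hblt, ?_⟩, ?_⟩
      · rw [crank_nuMap hblt]; exact hbS
      · exact nuMap_lt_of_lt_crank hblt hbt
    · rw [crank_nuMap hblt]

include hQ2 hQsep in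
lemma contract_isDyck {S : Finset ℕ} (hS : IsDyckS n S) (hQS : Q ⊆ S)
    (hQ2S : ∀ q ∈ Q, q + 2 ∉ S) : IsDyckS (n - Q.card) (contractS n Q S) := by
  have hsplit2n := S_prefix_split hS hQS hQ2S (2 * n)
  have hfull : S.filter (· < 2 * n) = S := by
    apply Finset.filter_true_of_mem
    intro x hx
    exact Finset.mem_range.1 (hS.1 hx)
  have hcards : ((S ∩ Rfree n Q).filter (· < 2 * n)).card = n - Q.card := by
    have hQn := Qcard_le hQ2 hQsep
    have hQf : (Q.filter (· < 2 * n)).card = Q.card := by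
      rw [Finset.filter_true_of_mem]
      intro q hq
      have := hQ2 q hq
      omega
    rw [hfull, hS.2.1, hQf] at hsplit2n
    omega
  refine ⟨Finset.filter_subset _ _, ?_, ?_⟩
  · have h1 : (contractS n Q S).filter (· < 2 * (n - Q.card)) = contractS n Q S := by
      apply Finset.filter_true_of_mem
      intro x hx
      exact Finset.mem_range.1 (Finset.mem_filter.1 hx).1
    have h2 := contract_count hQ2 hQsep (S := S) (2 * n)
    rw [crank_total hQ2 hQsep, h1, hcards] at h2
    exact h2
  · intro s hs
    rcases lt_or_eq_of_le hs with hlt | heq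
    · -- s = crank (nuMap s)
      have hsR : s < (Rfree n Q).card := by rw [card_Rfree' hQ2 hQsep]; exact hlt
      set t := nuMap n Q s with htdef
      have htR : t ∈ Rfree n Q := nuMap_mem hsR
      have ht2n : t ≤ 2 * n := by
        rw [Rfree, Finset.mem_sdiff] at htR
        have := Finset.mem_range.1 htR.1
        omega
      have hcr : crank n Q t = s := crank_nuMap hsR
      have hcc := contract_count hQ2 hQsep (S := S) t
      rw [hcr] at hcc
      rw [hcc]
      have hpp := prefix_partition hQsep t ht2n
      have hss := S_prefix_split hS hQS hQ2S t
      have hmi := master_ineq hQ2 hS hQS hQ2S t ht2n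
      have hq2 := Qup_filter_le (Q := Q) t
      have hcrdef : crank n Q t = ((Rfree n Q).filter (· < t)).card := rfl
      omega
    · rw [heq]
      have h1 : (contractS n Q S).filter (· < 2 * (n - Q.card)) = contractS n Q S := by
        apply Finset.filter_true_of_mem
        intro x hx
        exact Finset.mem_range.1 (Finset.mem_filter.1 hx).1
      have h2 := contract_count hQ2 hQsep (S := S) (2 * n)
      rw [crank_total hQ2 hQsep, h1, hcards] at h2
      rw [h1, h2]

include hQ2 hQsep in
lemma expand_split {S' : Finset ℕ} (t : ℕ) :
    ((expandS n Q S').filter (· < t)).card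
      = (Q.filter (· < t)).card
        + (((Rfree n Q).filter (fun x => crank n Q x ∈ S')).filter (· < t)).card := by
  rw [expandS, Finset.filter_union, Finset.card_union_of_disjoint]
  rw [Finset.disjoint_right]
  intro x hx hx'
  have hxR := (Finset.mem_filter.1 (Finset.mem_filter.1 hx).1).1
  rw [Rfree, Finset.mem_sdiff] at hxR
  exact hxR.2 (Finset.mem_union.2 (Or.inl (Finset.mem_filter.1 hx').1))

include hQ2 hQsep in
lemma expand_isDyck {S' : Finset ℕ} (hS' : IsDyckS (n - Q.card) S') :
    IsDyckS n (expandS n Q S') := by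
  have hQn := Qcard_le hQ2 hQsep
  refine ⟨?_, ?_, ?_⟩
  · intro x hx
    rcases Finset.mem_union.1 hx with h | h
    · exact Finset.mem_range.2 (by have := hQ2 x h; omega)
    · rcases Finset.mem_filter.1 h with ⟨hxR, -⟩
      rw [Rfree, Finset.mem_sdiff] at hxR
      exact hxR.1
  · have h1 := expand_split hQ2 hQsep (S' := S') (2 * n)
    have hfull : (expandS n Q S').filter (· < 2 * n) = expandS n Q S' := by
      apply Finset.filter_true_of_mem
      intro x hx
      rcases Finset.mem_union.1 hx with h | h
      · have := hQ2 x h; omega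
      · rcases Finset.mem_filter.1 h with ⟨hxR, -⟩
        rw [Rfree, Finset.mem_sdiff] at hxR
        exact Finset.mem_range.1 hxR.1
    have hQf : (Q.filter (· < 2 * n)).card = Q.card := by
      rw [Finset.filter_true_of_mem]
      intro q hq
      have := hQ2 q hq
      omega
    have h2 := expand_count (n := n) (Q := Q) (S' := S') (2 * n)
    have h3 : S'.filter (· < crank n Q (2 * n)) = S' := by
      rw [crank_total hQ2 hQsep]
      apply Finset.filter_true_of_mem
      intro x hx
      exact Finset.mem_range.1 (hS'.1 hx)
    rw [hfull, hQf, h2, h3, hS'.2.1] at h1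
    omega
  · intro t ht
    have h1 := expand_split hQ2 hQsep (S' := S') t
    have h2 := expand_count (n := n) (Q := Q) (S' := S') t
    have hpp := prefix_partition hQsep t ht
    have hq2 := Qup_filter_le (Q := Q) t
    have hdy := hS'.2.2 (crank n Q t) (crank_le_2m hQ2 hQsep t)
    have hcrdef : crank n Q t = ((Rfree n Q).filter (· < t)).card := rfl
    omega

include hQ2 hQsep in
lemma expand_Qsub {S' : Finset ℕ} : Q ⊆ expandS n Q S' := Finset.subset_union_left

include hQ2 hQsep in
lemma expand_Q2disj {S' : Finset ℕ} : ∀ q ∈ Q, q + 2 ∉ expandS n Q S' := by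
  intro q hq hmem
  rcases Finset.mem_union.1 hmem with h | h
  · exact hQsep q hq h
  · rcases Finset.mem_filter.1 h with ⟨hxR, -⟩
    rw [Rfree, Finset.mem_sdiff] at hxR
    exact hxR.2 (Finset.mem_union.2 (Or.inr (Finset.mem_image.2 ⟨q, hq, rfl⟩)))

include hQ2 hQsep in
/-- the contraction equivalence -/
def contractEquiv :
    {S : Finset ℕ // (IsDyckS n S ∧ Q ⊆ S ∧ ∀ q ∈ Q, q + 2 ∉ S)}
      ≃ {S' : Finset ℕ // IsDyckS (n - Q.card) S'} where
  toFun := fun ⟨S, hS, hQS, hQ2S⟩ => ⟨contractS n Q S, contract_isDyck hQ2 hQsep hS hQS hQ2S⟩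
  invFun := fun ⟨S', h'⟩ => ⟨expandS n Q S', expand_isDyck hQ2 hQsep h',
    expand_Qsub hQ2 hQsep, expand_Q2disj hQ2 hQsep⟩
  left_inv := by
    rintro ⟨S, hS, hQS, hQ2S⟩
    apply Subtype.ext
    show expandS n Q (contractS n Q S) = S
    ext x
    rw [expandS, Finset.mem_union]
    constructor
    · rintro (h | h)
      · exact hQS h
      · rcases Finset.mem_filter.1 h with ⟨hxR, hxc⟩
        rcases Finset.mem_filter.1 hxc with ⟨-, hnu⟩
        rwa [nuMap_crank hxR] at hnu
    · intro hxS
      by_cases hxQ : x ∈ Q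
      · exact Or.inl hxQ
      · have hxR : x ∈ Rfree n Q := by
          rw [Rfree, Finset.mem_sdiff]
          refine ⟨hS.1 hxS, ?_⟩
          rw [Finset.mem_union]
          rintro (h | h)
          · exact hxQ h
          · rcases Finset.mem_image.1 h with ⟨q, hq, rfl⟩
            exact hQ2S q hq hxS
        refine Or.inr (Finset.mem_filter.2 ⟨hxR, Finset.mem_filter.2 ⟨?_, ?_⟩⟩)
        · exact Finset.mem_range.2 (by rw [← card_Rfree' hQ2 hQsep]; exact crank_lt_card hxR)
        · rwa [nuMap_crank hxR]
  right_inv := by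
    rintro ⟨S', h'⟩
    apply Subtype.ext
    show contractS n Q (expandS n Q S') = S'
    ext i
    simp only [contractS, Finset.mem_filter, Finset.mem_range]
    constructor
    · rintro ⟨hi, hnu⟩
      have hiR : i < (Rfree n Q).card := by rw [card_Rfree' hQ2 hQsep]; exact hi
      have hmem : nuMap n Q i ∈ Rfree n Q := nuMap_mem hiR
      rcases Finset.mem_union.1 hnu with h | h
      · exfalso
        rw [Rfree, Finset.mem_sdiff] at hmem
        exact hmem.2 (Finset.mem_union.2 (Or.inl h))
      · rcases Finset.mem_filter.1 h with ⟨-, hc⟩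
        rwa [crank_nuMap hiR] at hc
    · intro hiS
      have hi : i < 2 * (n - Q.card) := Finset.mem_range.1 (h'.1 hiS)
      have hiR : i < (Rfree n Q).card := by rw [card_Rfree' hQ2 hQsep]; exact hi
      refine ⟨hi, Finset.mem_union.2 (Or.inr (Finset.mem_filter.2 ⟨nuMap_mem hiR, ?_⟩))⟩
      rwa [crank_nuMap hiR]

end Contraction3

section PermWord

variable {n : ℕ}

/-- positions of left-to-right minima -/
def LRpos (π : Equiv.Perm (Fin n)) : Finset (Fin n) :=
  Finset.univ.filter (fun p => ∀ q, q < p → π p < π q)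

/-- values of left-to-right minima -/
def LRval (π : Equiv.Perm (Fin n)) : Finset (Fin n) := (LRpos π).image π

/-- the word encoding of a permutation -/
def wordS (π : Equiv.Perm (Fin n)) : Finset ℕ :=
  ((LRpos π).image (fun p => 2 * p.val))
    ∪ ((Finset.univ \ LRval π).image (fun v => 2 * (n - 1 - v.val) + 1))

lemma mem_wordS_even (π : Equiv.Perm (Fin n)) (p : Fin n) :
    2 * (p : ℕ) ∈ wordS π ↔ p ∈ LRpos π := by
  rw [wordS, Finset.mem_union]
  constructor
  · rintro (h | h)
    · rcases Finset.mem_image.1 h with ⟨p', hp', heq⟩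
      have : p' = p := Fin.ext (by omega)
      rwa [← this]
    · rcases Finset.mem_image.1 h with ⟨v, -, heq⟩
      omega
  · intro h
    exact Or.inl (Finset.mem_image.2 ⟨p, h, rfl⟩)

lemma mem_wordS_odd (π : Equiv.Perm (Fin n)) (v : Fin n) :
    2 * (n - 1 - (v : ℕ)) + 1 ∈ wordS π ↔ v ∉ LRval π := by
  have hv : (v : ℕ) ≤ n - 1 := by have := v.2; omega
  rw [wordS, Finset.mem_union]
  constructor
  · rintro (h | h)
    · rcases Finset.mem_image.1 h with ⟨p, -, heq⟩
      omega
    · rcases Finset.mem_image.1 h with ⟨v', hv', heq⟩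
      rcases Finset.mem_sdiff.1 hv' with ⟨-, hnot⟩
      have hv'2 : (v' : ℕ) ≤ n - 1 := by have := v'.2; omega
      have : v' = v := Fin.ext (by omega)
      rwa [← this]
  · intro h
    exact Or.inr (Finset.mem_image.2 ⟨v, Finset.mem_sdiff.2 ⟨Finset.mem_univ v, h⟩, rfl⟩)

lemma wordS_subset (π : Equiv.Perm (Fin n)) : wordS π ⊆ Finset.range (2 * n) := by
  intro x hx
  rcases Finset.mem_union.1 hx with h | h
  · rcases Finset.mem_image.1 h with ⟨p, -, rfl⟩
    exact Finset.mem_range.2 (by have := p.2; omega)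
  · rcases Finset.mem_image.1 h with ⟨v, -, rfl⟩
    have hn : 0 < n := Fin.pos v
    exact Finset.mem_range.2 (by omega)

lemma card_LRval (π : Equiv.Perm (Fin n)) : (LRval π).card = (LRpos π).card :=
  Finset.card_image_of_injective _ π.injective

lemma card_wordS (π : Equiv.Perm (Fin n)) : (wordS π).card = n := by
  rw [wordS, Finset.card_union_of_disjoint]
  · rw [Finset.card_image_of_injective _ (fun a b hab => Fin.ext (by omega)),
      Finset.card_image_of_injective _ (fun a b hab => Fin.ext (by
        have ha := a.2; have hb := b.2; omega)),
      Finset.card_sdiff_of_subset (Finset.subset_univ _), card_LRval, Finset.card_univ, Fintype.card_fin]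
    have : (LRpos π).card ≤ n := by
      have := Finset.card_le_card (Finset.subset_univ (LRpos π))
      simpa using this
    omega
  · rw [Finset.disjoint_right]
    rintro x hx hx'
    rcases Finset.mem_image.1 hx with ⟨v, -, rfl⟩
    rcases Finset.mem_image.1 hx' with ⟨p, -, heq⟩
    omega

lemma posbd {π : Equiv.Perm (Fin n)} {p : Fin n} (hp : p ∈ LRpos π) :
    (p : ℕ) + (π p : ℕ) ≤ n - 1 := by
  rcases Finset.mem_filter.1 hp with ⟨-, hmin⟩
  have hsub : (Finset.univ.filter (fun q : Fin n => q ≤ p)).image π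
      ⊆ Finset.univ.filter (fun v => π p ≤ v) := by
    intro v hv
    rcases Finset.mem_image.1 hv with ⟨q, hq, rfl⟩
    rcases Finset.mem_filter.1 hq with ⟨-, hqp⟩
    rcases lt_or_eq_of_le hqp with h | h
    · exact Finset.mem_filter.2 ⟨Finset.mem_univ _, (hmin q h).le⟩
    · rw [h]
      exact Finset.mem_filter.2 ⟨Finset.mem_univ _, le_refl _⟩
  have hc := Finset.card_le_card hsub
  rw [Finset.card_image_of_injective _ π.injective] at hc
  have h1 : (Finset.univ.filter (fun q : Fin n => q ≤ p)) = Finset.Iic p := by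
    ext q; simp
  have h2 : (Finset.univ.filter (fun v : Fin n => π p ≤ v)) = Finset.Ici (π p) := by
    ext q; simp
  rw [h1, h2, Fin.card_Iic, Fin.card_Ici] at hc
  have := (π p).2
  omega

/-- count of large LR-minimum values -/
def cntV (π : Equiv.Perm (Fin n)) (e : ℕ) : ℕ :=
  ((LRval π).filter (fun v => n - e ≤ v.val)).card

/-- count of early LR-minimum positions -/
def cntP (π : Equiv.Perm (Fin n)) (e : ℕ) : ℕ :=
  ((LRpos π).filter (fun p => p.val < e)).card

lemma card_filter_val_ge (e : ℕ) (he : e ≤ n) :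
    (Finset.univ.filter (fun v : Fin n => n - e ≤ (v : ℕ))).card = e := by
  have hcard : ∀ m : ℕ, m ≤ n → (Finset.univ.filter (fun v : Fin n => m ≤ (v : ℕ))).card = n - m := by
    intro m hm
    have h2 : (Finset.univ.filter (fun v : Fin n => m ≤ (v : ℕ))).card
        + (Finset.univ.filter (fun v : Fin n => ¬ (m ≤ (v : ℕ)))).card = n := by
      rw [Finset.card_filter_add_card_filter_not]
      simp
    have h3 : (Finset.univ.filter (fun v : Fin n => ¬ (m ≤ (v : ℕ)))).card = m := by
      have : (Finset.univ.filter (fun v : Fin n => ¬ (m ≤ (v : ℕ))))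
          = (Finset.range m).attachFin (fun x hx => lt_of_lt_of_le (Finset.mem_range.1 hx) hm) := by
        ext v
        simp only [Finset.mem_filter, Finset.mem_univ, true_and, Finset.mem_attachFin,
          Finset.mem_range, not_le]
      rw [this, Finset.card_attachFin, Finset.card_range]
    omega
  rw [hcard (n - e) (by omega)]
  omega

/-- even-prefix count -/
lemma wordS_even_count (π : Equiv.Perm (Fin n)) (e : ℕ) (he : e ≤ n) :
    ((wordS π).filter (· < 2 * e)).card + cntV π e = cntP π e + e := by
  have hdisj : Disjoint (((LRpos π).image (fun p => 2 * p.val)).filter (· < 2 * e))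
      (((Finset.univ \ LRval π).image (fun v => 2 * (n - 1 - v.val) + 1)).filter (· < 2 * e)) := by
    rw [Finset.disjoint_right]
    rintro x hx hx'
    rcases Finset.mem_image.1 (Finset.mem_filter.1 hx).1 with ⟨v, -, rfl⟩
    rcases Finset.mem_image.1 (Finset.mem_filter.1 hx').1 with ⟨p, -, heq⟩
    omega
  rw [wordS, Finset.filter_union, Finset.card_union_of_disjoint hdisj]
  have h1 : (((LRpos π).image (fun p => 2 * p.val)).filter (· < 2 * e)).card = cntP π e := by
    rw [cntP]
    rw [Finset.filter_image]
    · rw [Finset.card_image_of_injective _ (fun a b hab => Fin.ext (by omega))]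
      congr 1
      apply Finset.filter_congr
      intro p _
      constructor
      · intro h; omega
      · intro h; omega
  have h2 : (((Finset.univ \ LRval π).image (fun v => 2 * (n - 1 - v.val) + 1)).filter
      (· < 2 * e)).card + cntV π e = e := by
    rw [Finset.filter_image]
    rw [Finset.card_image_of_injective _ (fun a b hab => Fin.ext (by
      have := a.2; have := b.2; omega))]
    have heq : (Finset.univ \ LRval π).filter (fun v => 2 * (n - 1 - v.val) + 1 < 2 * e)
        = (Finset.univ.filter (fun v : Fin n => n - e ≤ (v : ℕ))) \
          ((LRval π).filter (fun v => n - e ≤ v.val)) := by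
      ext v
      have hvlt := v.2
      simp only [Finset.mem_filter, Finset.mem_sdiff, Finset.mem_univ, true_and]
      constructor
      · rintro ⟨hnv, hlt⟩
        have : n - e ≤ (v : ℕ) := by omega
        exact ⟨this, fun hc => hnv hc.1⟩
      · rintro ⟨hge, hnv⟩
        refine ⟨fun hc => hnv ⟨hc, hge⟩, by omega⟩
    rw [heq, Finset.card_sdiff_of_subset]
    · rw [card_filter_val_ge e he]
      have hsub : ((LRval π).filter (fun v => n - e ≤ v.val)).card
          ≤ (Finset.univ.filter (fun v : Fin n => n - e ≤ (v : ℕ))).card := by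
        apply Finset.card_le_card
        intro v hv
        exact Finset.mem_filter.2 ⟨Finset.mem_univ _, (Finset.mem_filter.1 hv).2⟩
      rw [card_filter_val_ge e he] at hsub
      rw [cntV]
      omega
    · intro v hv
      rcases Finset.mem_filter.1 hv with ⟨h1, h2⟩
      exact Finset.mem_filter.2 ⟨Finset.mem_univ _, h2⟩
  omega

/-- odd-prefix count -/
lemma wordS_odd_count (π : Equiv.Perm (Fin n)) (e : ℕ) (he : e < n) :
    ((wordS π).filter (· < 2 * e + 1)).card + cntV π e = cntP π (e + 1) + e := by
  have hstep : (wordS π).filter (· < 2 * e + 1)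
      = ((wordS π).filter (· < 2 * e)) ∪ ((wordS π).filter (· = 2 * e)) := by
    rw [← Finset.filter_or]
    apply Finset.filter_congr
    intro x _
    constructor
    · intro h; omega
    · intro h; omega
  have hdisj : Disjoint ((wordS π).filter (· < 2 * e)) ((wordS π).filter (· = 2 * e)) := by
    simp only [Finset.disjoint_filter]
    intro x _ h1 h2
    omega
  have heqcard : ((wordS π).filter (· = 2 * e)).card
      = if (⟨e, he⟩ : Fin n) ∈ LRpos π then 1 else 0 := by
    rw [Finset.filter_eq']
    by_cases hmem : (2 * e) ∈ wordS π
    · rw [if_pos hmem, Finset.card_singleton]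
      have : 2 * e = 2 * ((⟨e, he⟩ : Fin n) : ℕ) := rfl
      rw [this, mem_wordS_even] at hmem
      rw [if_pos hmem]
    · rw [if_neg hmem]
      have : 2 * e = 2 * ((⟨e, he⟩ : Fin n) : ℕ) := rfl
      rw [this, mem_wordS_even] at hmem
      rw [if_neg hmem]
      simp
  have hPstep : cntP π (e + 1) = cntP π e + (if (⟨e, he⟩ : Fin n) ∈ LRpos π then 1 else 0) := by
    rw [cntP, cntP]
    have hsp : (LRpos π).filter (fun p => p.val < e + 1)
        = ((LRpos π).filter (fun p => p.val < e)) ∪ ((LRpos π).filter (· = ⟨e, he⟩)) := by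
      rw [← Finset.filter_or]
      apply Finset.filter_congr
      intro p _
      constructor
      · intro h
        rcases Nat.lt_succ_iff_lt_or_eq.1 h with h' | h'
        · exact Or.inl h'
        · exact Or.inr (Fin.ext h')
      · rintro (h | rfl)
        · omega
        · simp
    rw [hsp, Finset.card_union_of_disjoint]
    · rw [Finset.filter_eq']
      split <;> simp
    · simp only [Finset.disjoint_filter]
      rintro x _ h1 rfl
      simp at h1
  have hbase := wordS_even_count π e (le_of_lt he)
  rw [hstep, Finset.card_union_of_disjoint hdisj, heqcard, hPstep]
  omega

/-- the even Dyck inequality -/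
lemma cntV_le_cntP (π : Equiv.Perm (Fin n)) (e : ℕ) : cntV π e ≤ cntP π e := by
  rw [cntV, cntP]
  apply Finset.card_le_card_of_injOn π.symm
  · intro v hv
    rcases Finset.mem_filter.1 hv with ⟨hvV, hge⟩
    rcases Finset.mem_image.1 hvV with ⟨p, hp, rfl⟩
    rw [Equiv.symm_apply_apply]
    refine Finset.mem_filter.2 ⟨hp, ?_⟩
    have hb := posbd hp
    have := (π p).2
    have := p.2
    omega
  · intro a _ b _ hab
    exact π.symm.injective hab

/-- the strict odd Dyck inequality at a non-LR-minimum position -/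
lemma cntV_lt_cntP (π : Equiv.Perm (Fin n)) (e : ℕ) (he : e < n)
    (hnot : (⟨e, he⟩ : Fin n) ∉ LRpos π) : cntV π e < cntP π e := by
  classical
  have hWne : ((Finset.Iic (⟨e, he⟩ : Fin n)).image π).Nonempty :=
    ⟨π ⟨e, he⟩, Finset.mem_image.2 ⟨_, Finset.mem_Iic.2 le_rfl, rfl⟩⟩
  obtain ⟨pstar, hpmem, hpm⟩ := Finset.mem_image.1 (Finset.min'_mem _ hWne)
  have hple : pstar ≤ ⟨e, he⟩ := Finset.mem_Iic.1 hpmem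
  have hmin : ∀ q : Fin n, q ≤ ⟨e, he⟩ → π pstar ≤ π q := by
    intro q hq
    exact le_of_eq_of_le hpm (Finset.min'_le _ _ (Finset.mem_image.2 ⟨q, Finset.mem_Iic.2 hq, rfl⟩))
  have hpLR : pstar ∈ LRpos π := by
    refine Finset.mem_filter.2 ⟨Finset.mem_univ _, ?_⟩
    intro q hq
    refine lt_of_le_of_ne (hmin q (le_trans hq.le hple)) ?_
    intro hc
    exact absurd (π.injective hc) (ne_of_lt hq).symm
  have hplt : pstar < ⟨e, he⟩ := by
    rcases lt_or_eq_of_le hple with h | h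
    · exact h
    · exact absurd (h ▸ hpLR) hnot
  have hmsmall : ((π pstar) : ℕ) < n - e := by
    by_contra hc
    rw [not_lt] at hc
    have hsub : (Finset.Iic (⟨e, he⟩ : Fin n)).image π
        ⊆ Finset.univ.filter (fun v : Fin n => n - e ≤ (v : ℕ)) := by
      intro v hv
      rcases Finset.mem_image.1 hv with ⟨q, hq, rfl⟩
      have h1 : ((π pstar) : ℕ) ≤ ((π q) : ℕ) := hmin q (Finset.mem_Iic.1 hq)
      exact Finset.mem_filter.2 ⟨Finset.mem_univ _, by omega⟩
    have hcard := Finset.card_le_card hsub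
    rw [Finset.card_image_of_injective _ π.injective, Fin.card_Iic,
      card_filter_val_ge e (le_of_lt he)] at hcard
    simp only [Fin.val_mk] at hcard
    omega
  have hsub : insert pstar (((LRval π).filter (fun v => n - e ≤ v.val)).image π.symm)
      ⊆ (LRpos π).filter (fun p => p.val < e) := by
    intro x hx
    rcases Finset.mem_insert.1 hx with rfl | hx
    · exact Finset.mem_filter.2 ⟨hpLR, by exact_mod_cast hplt⟩
    · rcases Finset.mem_image.1 hx with ⟨v, hv, rfl⟩
      rcases Finset.mem_filter.1 hv with ⟨hvV, hge⟩
      rcases Finset.mem_image.1 hvV with ⟨p, hp, rfl⟩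
      rw [Equiv.symm_apply_apply]
      refine Finset.mem_filter.2 ⟨hp, ?_⟩
      have hb := posbd hp
      have := (π p).2
      omega
  have hnotmem : pstar ∉ ((LRval π).filter (fun v => n - e ≤ v.val)).image π.symm := by
    intro hc
    rcases Finset.mem_image.1 hc with ⟨v, hv, hveq⟩
    rcases Finset.mem_filter.1 hv with ⟨-, hge⟩
    have : v = π pstar := by rw [← hveq, Equiv.apply_symm_apply]
    rw [this] at hge
    omega
  have hcard := Finset.card_le_card hsub
  rw [Finset.card_insert_of_notMem hnotmem,
    Finset.card_image_of_injective _ π.symm.injective] at hcard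
  rw [cntV, cntP]
  omega

/-- the word of any permutation is a Dyck word -/
lemma wordS_isDyck (π : Equiv.Perm (Fin n)) : IsDyckS n (wordS π) := by
  refine ⟨wordS_subset π, card_wordS π, ?_⟩
  intro t ht
  rcases Nat.even_or_odd t with ⟨e, rfl⟩ | ⟨e, rfl⟩
  · have he : e ≤ n := by omega
    have h1 := wordS_even_count π e he
    have h2 := cntV_le_cntP π e
    rw [show e + e = 2 * e by omega]
    omega
  · have he : e < n := by omega
    have h1 := wordS_odd_count π e he
    by_cases hmem : (⟨e, he⟩ : Fin n) ∈ LRpos π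
    · have h2 := cntV_le_cntP π e
      have hPstep : cntP π e + 1 ≤ cntP π (e + 1) := by
        rw [cntP, cntP]
        have hsub : insert (⟨e, he⟩ : Fin n) ((LRpos π).filter (fun p => p.val < e))
            ⊆ (LRpos π).filter (fun p => p.val < e + 1) := by
          intro x hx
          rcases Finset.mem_insert.1 hx with rfl | hx
          · exact Finset.mem_filter.2 ⟨hmem, by simp⟩
          · rcases Finset.mem_filter.1 hx with ⟨hx1, hx2⟩
            exact Finset.mem_filter.2 ⟨hx1, by omega⟩
        have hcard := Finset.card_le_card hsub
        rw [Finset.card_insert_of_notMem (by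
          intro hc
          have := (Finset.mem_filter.1 hc).2
          simp at this)] at hcard
        omega
      omega
    · have h2 := cntV_lt_cntP π e he hmem
      have hPmono : cntP π e ≤ cntP π (e + 1) := by
        apply Finset.card_le_card
        exact filter_subset_filter_of_imp (fun p _ h => by omega)
      omega

end PermWord

/-- `π` (as the word `π(1)⋯π(n)`) is `123`-avoiding. -/
def Avoids123 {n : ℕ} (π : Equiv.Perm (Fin n)) : Prop :=
  ¬ ∃ i₁ i₂ i₃ : Fin n, i₁ < i₂ ∧ i₂ < i₃ ∧ π i₁ < π i₂ ∧ π i₂ < π i₃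

/-- `i ∈ [n-1]` (1-based) is an ascent of `π`: `π(i) < π(i+1)`. -/
def IsAscentAt {n : ℕ} (π : Equiv.Perm (Fin n)) (i : ℕ) : Prop :=
  ∃ (h1 : i - 1 < n) (h2 : i < n), 1 ≤ i ∧ π ⟨i - 1, h1⟩ < π ⟨i, h2⟩

section Ascents

variable {n : ℕ}

lemma avoids_inv {π : Equiv.Perm (Fin n)} (h : Avoids123 π) : Avoids123 π⁻¹ := by
  rintro ⟨i1, i2, i3, h12, h23, hv12, hv23⟩
  exact h ⟨π⁻¹ i1, π⁻¹ i2, π⁻¹ i3, hv12, hv23, by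
    simpa using h12, by simpa using h23⟩

lemma not_mem_LRpos {π : Equiv.Perm (Fin n)} {p : Fin n} (h : p ∉ LRpos π) :
    ∃ r, r < p ∧ π r < π p := by
  have h2 : ¬ ∀ q, q < p → π p < π q := fun hc =>
    h (Finset.mem_filter.2 ⟨Finset.mem_univ _, hc⟩)
  push_neg at h2
  obtain ⟨r, hr, hnlt⟩ := h2
  refine ⟨r, hr, lt_of_le_of_ne hnlt ?_⟩
  intro hc
  exact absurd (π.injective hc) (ne_of_lt hr)

lemma mem_LRpos_lt {π : Equiv.Perm (Fin n)} {p q : Fin n} (h : p ∈ LRpos π) (hq : q < p) :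
    π p < π q := (Finset.mem_filter.1 h).2 q hq

lemma ascent_iff_LR {π : Equiv.Perm (Fin n)} (hav : Avoids123 π) {p q : Fin n}
    (hpq : p < q) (hsucc : (q : ℕ) = (p : ℕ) + 1) :
    π p < π q ↔ (p ∈ LRpos π ∧ q ∉ LRpos π) := by
  constructor
  · intro hasc
    constructor
    · by_contra hcon
      obtain ⟨r, hr, hv⟩ := not_mem_LRpos hcon
      exact hav ⟨r, p, q, hr, hpq, hv, hasc⟩
    · intro hq
      exact absurd (mem_LRpos_lt hq hpq) (not_lt.2 hasc.le)
  · rintro ⟨hp, hq⟩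
    obtain ⟨r, hr, hv⟩ := not_mem_LRpos hq
    have hrp : r ≤ p := by
      rw [Fin.le_def]
      rw [Fin.lt_def] at hr
      omega
    rcases lt_or_eq_of_le hrp with h | h
    · exact lt_trans (mem_LRpos_lt hp h) hv
    · rw [← h]
      exact hv

lemma mem_LRpos_inv_iff (π : Equiv.Perm (Fin n)) (v : Fin n) :
    v ∈ LRpos π⁻¹ ↔ v ∈ LRval π := by
  constructor
  · intro hv
    have hp : π⁻¹ v ∈ LRpos π := by
      refine Finset.mem_filter.2 ⟨Finset.mem_univ _, ?_⟩
      intro q hq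
      by_contra hc
      rw [not_lt] at hc
      have hlt : π q < π (π⁻¹ v) := by
        refine lt_of_le_of_ne hc ?_
        intro hcc
        exact absurd (π.injective hcc.symm) (ne_of_lt hq).symm
      rw [(show ∀ (σ : Equiv.Perm (Fin n)) x, σ (σ⁻¹ x) = x from fun σ => σ.apply_symm_apply)] at hlt
      have := mem_LRpos_lt hv hlt
      simp only [(show ∀ (σ : Equiv.Perm (Fin n)) x, σ⁻¹ (σ x) = x from fun σ => σ.symm_apply_apply)] at this
      exact absurd this (not_lt.2 hq.le)
    exact Finset.mem_image.2 ⟨π⁻¹ v, hp, by simp⟩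
  · intro hv
    rcases Finset.mem_image.1 hv with ⟨p, hp, rfl⟩
    refine Finset.mem_filter.2 ⟨Finset.mem_univ _, ?_⟩
    intro u hu
    simp only [(show ∀ (σ : Equiv.Perm (Fin n)) x, σ⁻¹ (σ x) = x from fun σ => σ.symm_apply_apply)]
    by_contra hc
    rw [not_lt] at hc
    have hne : π⁻¹ u ≠ p := by
      intro hcc
      rw [← hcc, (show ∀ (σ : Equiv.Perm (Fin n)) x, σ (σ⁻¹ x) = x from fun σ => σ.apply_symm_apply)] at hu
      exact absurd hu (lt_irrefl _)
    have hlt : π⁻¹ u < p := lt_of_le_of_ne hc hne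
    have := mem_LRpos_lt hp hlt
    rw [(show ∀ (σ : Equiv.Perm (Fin n)) x, σ (σ⁻¹ x) = x from fun σ => σ.apply_symm_apply)] at this
    exact absurd (lt_trans hu this) (lt_irrefl _)

lemma isAscentAt_iff {π : Equiv.Perm (Fin n)} {b : ℕ} (hb1 : 1 ≤ b) (hb2 : b < n) :
    IsAscentAt π b ↔ π ⟨b - 1, by omega⟩ < π ⟨b, hb2⟩ := by
  constructor
  · rintro ⟨h1, h2, -, hlt⟩
    exact hlt
  · intro h
    exact ⟨by omega, hb2, hb1, h⟩

lemma ascentB_iff_word {π : Equiv.Perm (Fin n)} (hav : Avoids123 π) {b : ℕ}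
    (hb1 : 1 ≤ b) (hb2 : b < n) :
    IsAscentAt π b ↔ (2 * (b - 1) ∈ wordS π ∧ 2 * (b - 1) + 2 ∉ wordS π) := by
  rw [isAscentAt_iff hb1 hb2]
  rw [ascent_iff_LR hav (p := ⟨b - 1, by omega⟩) (q := ⟨b, hb2⟩) (by rw [Fin.lt_def]; simp; omega)
    (by simp; omega)]
  have e1 : 2 * (b - 1) = 2 * ((⟨b - 1, by omega⟩ : Fin n) : ℕ) := rfl
  have e2 : 2 * (b - 1) + 2 = 2 * ((⟨b, hb2⟩ : Fin n) : ℕ) := by simp; omega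
  rw [e1, e2, mem_wordS_even, mem_wordS_even]

lemma ascentA_iff_word {π : Equiv.Perm (Fin n)} (hav : Avoids123 π) {a : ℕ}
    (ha1 : 1 ≤ a) (ha2 : a < n) :
    IsAscentAt π⁻¹ a ↔ (2 * (n - 1 - a) + 1 ∈ wordS π ∧ (2 * (n - 1 - a) + 1) + 2 ∉ wordS π) := by
  rw [isAscentAt_iff ha1 ha2]
  rw [ascent_iff_LR (avoids_inv hav) (p := ⟨a - 1, by omega⟩) (q := ⟨a, ha2⟩)
    (by rw [Fin.lt_def]; simp; omega) (by simp; omega)]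
  rw [mem_LRpos_inv_iff, mem_LRpos_inv_iff]
  have e1 : 2 * (n - 1 - a) + 1 = 2 * (n - 1 - ((⟨a, ha2⟩ : Fin n) : ℕ)) + 1 := rfl
  have e2 : (2 * (n - 1 - a) + 1) + 2
      = 2 * (n - 1 - ((⟨a - 1, by omega⟩ : Fin n) : ℕ)) + 1 := by simp; omega
  rw [e1, e2, mem_wordS_odd, mem_wordS_odd]
  tauto

end Ascents

section Reconstruct

variable {n : ℕ}

lemma rank_lt_card {α : Type*} [LinearOrder α] [DecidableEq α] {T : Finset α} {x : α}
    (hx : x ∈ T) : (T.filter (· < x)).card < T.card := by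
  apply Finset.card_lt_card
  refine ⟨Finset.filter_subset _ _, fun hsub => ?_⟩
  exact absurd (Finset.mem_filter.1 (hsub hx)).2 (lt_irrefl x)

lemma rank_strict {α : Type*} [LinearOrder α] [DecidableEq α] {T : Finset α} {x y : α}
    (hx : x ∈ T) (hxy : x < y) : (T.filter (· < x)).card < (T.filter (· < y)).card := by
  apply Finset.card_lt_card
  constructor
  · exact filter_subset_filter_of_imp (fun z _ hz => lt_trans hz hxy)
  · intro hsub
    exact absurd (Finset.mem_filter.1 (hsub (Finset.mem_filter.2 ⟨hx, hxy⟩))).2 (lt_irrefl x)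

lemma rank_mono {α : Type*} [LinearOrder α] [DecidableEq α] {T : Finset α} {x y : α}
    (hxy : x ≤ y) : (T.filter (· < x)).card ≤ (T.filter (· < y)).card :=
  Finset.card_le_card (filter_subset_filter_of_imp (fun z _ hz => lt_of_lt_of_le hz hxy))

/-- positions whose letter is `U` -/
def Pset (n : ℕ) (S : Finset ℕ) : Finset (Fin n) :=
  Finset.univ.filter (fun p : Fin n => 2 * p.val ∈ S)

/-- values whose letter is `D` -/
def Vset (n : ℕ) (S : Finset ℕ) : Finset (Fin n) :=
  Finset.univ.filter (fun v : Fin n => 2 * (n - 1 - v.val) + 1 ∉ S)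

lemma card_filter_split (V : Finset (Fin n)) (p : Fin n → Prop) [DecidablePred p] :
    (Finset.univ.filter p).card = (V.filter p).card + ((Finset.univ \ V).filter p).card := by
  rw [← Finset.card_union_of_disjoint]
  · congr 1
    ext x
    simp only [Finset.mem_filter, Finset.mem_union, Finset.mem_sdiff, Finset.mem_univ, true_and]
    tauto
  · rw [Finset.disjoint_right]
    intro x hx hx'
    rcases Finset.mem_filter.1 hx with ⟨hx1, -⟩
    exact (Finset.mem_sdiff.1 hx1).2 (Finset.mem_filter.1 hx').1

lemma abstract_even_count {S : Finset ℕ} (hsub : S ⊆ Finset.range (2 * n)) {e : ℕ} (he : e ≤ n) :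
    (S.filter (· < 2 * e)).card + ((Vset n S).filter (fun v => n - e ≤ v.val)).card
      = ((Pset n S).filter (fun p => p.val < e)).card + e := by
  have hpar : (S.filter (· < 2 * e))
      = (S.filter (fun x => x < 2 * e ∧ x % 2 = 0)) ∪ (S.filter (fun x => x < 2 * e ∧ x % 2 = 1)) := by
    rw [← Finset.filter_or]
    apply Finset.filter_congr
    intro x _
    constructor
    · intro h; omega
    · intro h; omega
  have hdisj : Disjoint (S.filter (fun x => x < 2 * e ∧ x % 2 = 0))
      (S.filter (fun x => x < 2 * e ∧ x % 2 = 1)) := by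
    simp only [Finset.disjoint_filter]
    intro x _ h1 h2
    omega
  have hev : ((Pset n S).filter (fun p => p.val < e)).card
      = (S.filter (fun x => x < 2 * e ∧ x % 2 = 0)).card := by
    apply Finset.card_bij (fun p _ => 2 * p.val)
    · intro p hp
      rcases Finset.mem_filter.1 hp with ⟨hp1, hp2⟩
      exact Finset.mem_filter.2 ⟨(Finset.mem_filter.1 hp1).2, by omega, by omega⟩
    · intro a _ b _ hab
      exact Fin.ext (by omega)
    · intro x hx
      rcases Finset.mem_filter.1 hx with ⟨hxS, hxlt, hxev⟩
      have hxn : x < 2 * n := Finset.mem_range.1 (hsub hxS)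
      refine ⟨⟨x / 2, by omega⟩, ?_, ?_⟩
      · refine Finset.mem_filter.2 ⟨Finset.mem_filter.2 ⟨Finset.mem_univ _, ?_⟩, ?_⟩
        · simpa [show 2 * (x / 2) = x by omega] using hxS
        · simp only [Fin.val_mk]
          omega
      · simp only [Fin.val_mk]
        omega
  have hod : ((Finset.univ \ Vset n S).filter (fun v => n - e ≤ v.val)).card
      = (S.filter (fun x => x < 2 * e ∧ x % 2 = 1)).card := by
    apply Finset.card_bij (fun v _ => 2 * (n - 1 - v.val) + 1)
    · intro v hv
      rcases Finset.mem_filter.1 hv with ⟨hv1, hv2⟩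
      have hvmem : 2 * (n - 1 - v.val) + 1 ∈ S := by
        have := (Finset.mem_sdiff.1 hv1).2
        rw [Vset, Finset.mem_filter] at this
        push_neg at this
        exact this (Finset.mem_univ _)
      have hvn := v.2
      refine Finset.mem_filter.2 ⟨hvmem, by omega, by omega⟩
    · intro a ha b hb hab
      have := a.2; have := b.2
      have ha2 := (Finset.mem_filter.1 ha).2
      have hb2 := (Finset.mem_filter.1 hb).2
      exact Fin.ext (by omega)
    · intro x hx
      rcases Finset.mem_filter.1 hx with ⟨hxS, hxlt, hxodd⟩
      have hxn : x < 2 * n := Finset.mem_range.1 (hsub hxS)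
      have hn : 0 < n := by omega
      refine ⟨⟨n - 1 - x / 2, by omega⟩, ?_, ?_⟩
      · refine Finset.mem_filter.2 ⟨Finset.mem_sdiff.2 ⟨Finset.mem_univ _, ?_⟩, ?_⟩
        · rw [Vset, Finset.mem_filter]
          push_neg
          intro _
          simpa [show 2 * (n - 1 - (n - 1 - x / 2)) + 1 = x by omega] using hxS
        · simp only [Fin.val_mk]
          omega
      · simp only [Fin.val_mk]
        omega
  have hsplit := card_filter_split (n := n) (Vset n S) (fun v => n - e ≤ v.val)
  have huniv := card_filter_val_ge (n := n) e he
  rw [hpar, Finset.card_union_of_disjoint hdisj, ← hev, ← hod]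
  omega

lemma card_Pset_eq_card_Vset {S : Finset ℕ} (hS : IsDyckS n S) :
    (Pset n S).card = (Vset n S).card := by
  obtain ⟨hsub, hcard, -⟩ := hS
  have h := abstract_even_count (n := n) hsub (le_refl n)
  have h1 : S.filter (· < 2 * n) = S := by
    apply Finset.filter_true_of_mem
    intro x hx
    exact Finset.mem_range.1 (hsub hx)
  have h2 : (Vset n S).filter (fun v => n - n ≤ v.val) = Vset n S := by
    apply Finset.filter_true_of_mem
    intro v _
    omega
  have h3 : (Pset n S).filter (fun p => p.val < n) = Pset n S := by
    apply Finset.filter_true_of_mem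
    intro p _
    exact p.2
  rw [h1, h2, h3, hcard] at h
  omega

lemma card_compl_eq {S : Finset ℕ} (hS : IsDyckS n S) :
    (Finset.univ \ Pset n S).card = (Finset.univ \ Vset n S).card := by
  rw [Finset.card_sdiff_of_subset (Finset.subset_univ _), Finset.card_sdiff_of_subset (Finset.subset_univ _),
    card_Pset_eq_card_Vset hS]

/-- the reconstructed permutation as a function -/
def permF (S : Finset ℕ) (hS : IsDyckS n S) : Fin n → Fin n := fun p =>
  if h : p ∈ Pset n S then
    dsc (Vset n S) (((Pset n S).filter (· < p)).card)
      (by rw [← card_Pset_eq_card_Vset hS]; exact rank_lt_card h)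
  else
    dsc (Finset.univ \ Vset n S) (((Finset.univ \ Pset n S).filter (· < p)).card)
      (by
        rw [← card_compl_eq hS]
        exact rank_lt_card (Finset.mem_sdiff.2 ⟨Finset.mem_univ _, h⟩))

lemma zero_mem_Pset {S : Finset ℕ} (hS : IsDyckS n S) (hn : 0 < n) :
    (⟨0, hn⟩ : Fin n) ∈ Pset n S := by
  have h1 := hS.2.2 1 (by omega)
  have h2 : (S.filter (· < 1)).Nonempty := by
    rw [← Finset.card_pos]
    omega
  obtain ⟨x, hx⟩ := h2
  rcases Finset.mem_filter.1 hx with ⟨hxS, hxlt⟩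
  have hx0 : x = 0 := by omega
  rw [hx0] at hxS
  refine Finset.mem_filter.2 ⟨Finset.mem_univ _, ?_⟩
  simpa using hxS

/-- the key inequality from the Dyck condition at an odd prefix -/
lemma key_ineq {S : Finset ℕ} (hS : IsDyckS n S) {q : Fin n} (hq : q ∉ Pset n S) :
    ((Vset n S).filter (fun v => n - q.val ≤ v.val)).card + 1
      ≤ ((Pset n S).filter (· < q)).card := by
  obtain ⟨hsub, hcard, hpre⟩ := hS
  have he : q.val < n := q.2
  have h1 := abstract_even_count (n := n) hsub (le_of_lt he)
  have h2 := hpre (2 * q.val + 1) (by omega)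
  have h3 := card_filter_lt_succ S (2 * q.val)
  have h4 : (2 * q.val) ∉ S := by
    intro hc
    exact hq (Finset.mem_filter.2 ⟨Finset.mem_univ _, hc⟩)
  rw [if_neg h4] at h3
  have h5 : ((Pset n S).filter (· < q)).card = ((Pset n S).filter (fun p => p.val < q.val)).card := by
    congr 1
  rw [h5]
  omega

end Reconstruct

section Reconstruct2

variable {n : ℕ}

lemma rank_split (S : Finset ℕ) (q : Fin n) :
    ((Pset n S).filter (· < q)).card + ((Finset.univ \ Pset n S).filter (· < q)).card
      = q.val := by
  have h := card_filter_split (n := n) (Pset n S) (· < q)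
  have h2 : (Finset.univ.filter (· < q)) = Finset.Iio q := by ext x; simp
  rw [h2, Fin.card_Iio] at h
  omega

lemma val_pos_of_not_mem_Pset {S : Finset ℕ} (hS : IsDyckS n S) {q : Fin n}
    (hq : q ∉ Pset n S) : 1 ≤ q.val := by
  by_contra hc
  have h0 : q = ⟨0, q.pos⟩ := Fin.ext (by show q.val = 0; omega)
  exact hq (h0 ▸ zero_mem_Pset hS q.pos)

/-- any value at least the threshold `n - q` is achieved by the non-minimum entry -/
lemma nonmin_gt {S : Finset ℕ} (hS : IsDyckS n S) {q : Fin n} (hq : q ∉ Pset n S)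
    {i : ℕ} (hi : i < (Vset n S).card)
    (hiq : ((Vset n S).filter (fun v => n - q.val ≤ v.val)).card ≤ i) :
    dsc (Vset n S) i hi < permF S hS q := by
  have hq1 := val_pos_of_not_mem_Pset hS hq
  have hqn : q.val < n := q.2
  set c : Fin n := ⟨n - q.val, by omega⟩ with hc
  have hkey := key_ineq hS hq
  have hsplitq := rank_split S q
  rw [permF, dif_neg hq]
  have step1 : dsc (Vset n S) i hi < c := by
    rw [dsc_lt_iff]
    have : (Vset n S).filter (fun x => c ≤ x) = (Vset n S).filter (fun v => n - q.val ≤ v.val) := by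
      apply Finset.filter_congr
      intro v _
      rw [Fin.le_def]
    rw [this]
    exact hiq
  have step2 : c ≤ dsc (Finset.univ \ Vset n S)
      (((Finset.univ \ Pset n S).filter (· < q)).card)
      (by rw [← card_compl_eq hS]
          exact rank_lt_card (Finset.mem_sdiff.2 ⟨Finset.mem_univ _, hq⟩)) := by
    rw [le_dsc_iff]
    have hseteq : (Finset.univ \ Vset n S).filter (fun x => c ≤ x)
        = (Finset.univ \ Vset n S).filter (fun v => n - q.val ≤ v.val) := by
      apply Finset.filter_congr
      intro v _
      rw [Fin.le_def]
    rw [hseteq]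
    have hsplit := card_filter_split (n := n) (Vset n S) (fun v => n - q.val ≤ v.val)
    have huniv := card_filter_val_ge (n := n) q.val (le_of_lt hqn)
    omega
  exact lt_of_lt_of_le step1 step2

lemma permF_lt {S : Finset ℕ} (hS : IsDyckS n S) {p q : Fin n} (hp : p ∈ Pset n S)
    (hqp : q < p) : permF S hS p < permF S hS q := by
  by_cases hq : q ∈ Pset n S
  · have h1 : permF S hS p = dsc (Vset n S) (((Pset n S).filter (· < p)).card)
        (by rw [← card_Pset_eq_card_Vset hS]; exact rank_lt_card hp) := by
      rw [permF, dif_pos hp]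
    have h2 : permF S hS q = dsc (Vset n S) (((Pset n S).filter (· < q)).card)
        (by rw [← card_Pset_eq_card_Vset hS]; exact rank_lt_card hq) := by
      rw [permF, dif_pos hq]
    rw [h1, h2]
    exact dsc_lt_dsc (rank_strict hq hqp) _
  · have h1 : permF S hS p = dsc (Vset n S) (((Pset n S).filter (· < p)).card)
        (by rw [← card_Pset_eq_card_Vset hS]; exact rank_lt_card hp) := by
      rw [permF, dif_pos hp]
    rw [h1]
    apply nonmin_gt hS hq
    have hkey := key_ineq hS hq
    have hmono : ((Pset n S).filter (· < q)).card ≤ ((Pset n S).filter (· < p)).card :=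
      rank_mono (le_of_lt hqp)
    omega

lemma permF_not_min {S : Finset ℕ} (hS : IsDyckS n S) {q : Fin n} (hq : q ∉ Pset n S) :
    ∃ p, p < q ∧ permF S hS p < permF S hS q := by
  have hn : 0 < n := q.pos
  have hq1 := val_pos_of_not_mem_Pset hS hq
  have h0q : (⟨0, hn⟩ : Fin n) < q := by
    rw [Fin.lt_def]
    exact hq1
  have hne : ((Pset n S).filter (· < q)).Nonempty :=
    ⟨⟨0, hn⟩, Finset.mem_filter.2 ⟨zero_mem_Pset hS hn, h0q⟩⟩
  set pmax := ((Pset n S).filter (· < q)).max' hne with hpm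
  have hpmem := Finset.max'_mem ((Pset n S).filter (· < q)) hne
  rcases Finset.mem_filter.1 hpmem with ⟨hpP, hpq⟩
  have hrank : ((Pset n S).filter (· < pmax)).card + 1 = ((Pset n S).filter (· < q)).card := by
    have hins : (Pset n S).filter (· < q) = insert pmax ((Pset n S).filter (· < pmax)) := by
      ext x
      simp only [Finset.mem_filter, Finset.mem_insert]
      constructor
      · rintro ⟨hx1, hx2⟩
        rcases lt_or_eq_of_le (Finset.le_max' ((Pset n S).filter (· < q)) x
          (Finset.mem_filter.2 ⟨hx1, hx2⟩)) with h | h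
        · exact Or.inr ⟨hx1, h⟩
        · exact Or.inl h
      · rintro (rfl | ⟨hx1, hx2⟩)
        · exact ⟨hpP, hpq⟩
        · exact ⟨hx1, lt_trans hx2 hpq⟩
    rw [hins, Finset.card_insert_of_notMem (by
      intro hc
      exact absurd (Finset.mem_filter.1 hc).2 (lt_irrefl _))]
  refine ⟨pmax, hpq, ?_⟩
  have h1 : permF S hS pmax = dsc (Vset n S) (((Pset n S).filter (· < pmax)).card)
      (by rw [← card_Pset_eq_card_Vset hS]; exact rank_lt_card hpP) := by
    rw [permF, dif_pos hpP]
  rw [h1]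
  apply nonmin_gt hS hq
  have hkey := key_ineq hS hq
  omega

lemma permF_inj {S : Finset ℕ} (hS : IsDyckS n S) : Function.Injective (permF S hS) := by
  have key : ∀ a b : Fin n, a < b → permF S hS a ≠ permF S hS b := by
    intro a b hab
    by_cases hb : b ∈ Pset n S
    · exact (ne_of_lt (permF_lt hS hb hab)).symm
    · by_cases ha : a ∈ Pset n S
      · simp only [permF]
        rw [dif_pos ha, dif_neg hb]
        intro hc
        have h1 := dsc_mem (Vset n S) _ (by rw [← card_Pset_eq_card_Vset hS]; exact rank_lt_card ha)
        rw [hc] at h1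
        have h2 := dsc_mem (Finset.univ \ Vset n S) _
          (by rw [← card_compl_eq hS]
              exact rank_lt_card (Finset.mem_sdiff.2 ⟨Finset.mem_univ _, hb⟩))
        exact (Finset.mem_sdiff.1 h2).2 h1
      · simp only [permF]
        rw [dif_neg ha, dif_neg hb]
        apply ne_of_gt
        exact dsc_lt_dsc (rank_strict (Finset.mem_sdiff.2 ⟨Finset.mem_univ _, ha⟩) hab) _
  intro a b hab
  rcases lt_trichotomy a b with h | h | h
  · exact absurd hab (key a b h)
  · exact h
  · exact absurd hab.symm (key b a h)

/-- the reconstructed permutation -/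
noncomputable def permOf (S : Finset ℕ) (hS : IsDyckS n S) : Equiv.Perm (Fin n) :=
  Equiv.ofBijective (permF S hS) (Finite.injective_iff_bijective.1 (permF_inj hS))

lemma permOf_apply (S : Finset ℕ) (hS : IsDyckS n S) (p : Fin n) :
    permOf S hS p = permF S hS p := rfl

lemma LRpos_permOf {S : Finset ℕ} (hS : IsDyckS n S) : LRpos (permOf S hS) = Pset n S := by
  ext p
  constructor
  · intro hp
    by_contra hc
    obtain ⟨r, hr, hlt⟩ := permF_not_min hS hc
    have := mem_LRpos_lt hp hr
    rw [permOf_apply, permOf_apply] at this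
    exact absurd hlt (not_lt.2 this.le)
  · intro hp
    refine Finset.mem_filter.2 ⟨Finset.mem_univ _, ?_⟩
    intro q hq
    exact permF_lt hS hp hq

lemma LRval_permOf {S : Finset ℕ} (hS : IsDyckS n S) : LRval (permOf S hS) = Vset n S := by
  have hsub : LRval (permOf S hS) ⊆ Vset n S := by
    intro v hv
    rcases Finset.mem_image.1 hv with ⟨p, hp, rfl⟩
    rw [LRpos_permOf hS] at hp
    rw [permOf_apply, permF, dif_pos hp]
    exact dsc_mem _ _ _
  apply Finset.eq_of_subset_of_card_le hsub
  rw [LRval, Finset.card_image_of_injective _ (permOf S hS).injective,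
    LRpos_permOf hS, card_Pset_eq_card_Vset hS]

lemma avoids_permOf {S : Finset ℕ} (hS : IsDyckS n S) : Avoids123 (permOf S hS) := by
  rintro ⟨i1, i2, i3, h12, h23, hv12, hv23⟩
  have h2 : i2 ∉ Pset n S := by
    intro hc
    exact absurd (permF_lt hS hc h12) (not_lt.2 hv12.le)
  have h3 : i3 ∉ Pset n S := by
    intro hc
    exact absurd (permF_lt hS hc h23) (not_lt.2 hv23.le)
  have hv23' : permF S hS i2 < permF S hS i3 := hv23
  simp only [permF] at hv23'
  rw [dif_neg h2, dif_neg h3] at hv23'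
  have := dsc_lt_dsc (T := Finset.univ \ Vset n S)
    (rank_strict (Finset.mem_sdiff.2 ⟨Finset.mem_univ _, h2⟩) h23)
    (by rw [← card_compl_eq hS]
        exact rank_lt_card (Finset.mem_sdiff.2 ⟨Finset.mem_univ _, h3⟩))
  exact absurd hv23' (not_lt.2 this.le)

lemma wordS_permOf {S : Finset ℕ} (hS : IsDyckS n S) : wordS (permOf S hS) = S := by
  ext x
  by_cases hx : x < 2 * n
  · rcases Nat.even_or_odd x with ⟨e, he⟩ | ⟨e, he⟩
    · have hen : e < n := by omega
      have hx2 : x = 2 * ((⟨e, hen⟩ : Fin n) : ℕ) := by simp; omega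
      rw [hx2, mem_wordS_even, LRpos_permOf hS]
      simp only [Pset, Finset.mem_filter, Finset.mem_univ, true_and]
    · have hen : e < n := by omega
      have hn : 0 < n := by omega
      have hx2 : x = 2 * (n - 1 - ((⟨n - 1 - e, by omega⟩ : Fin n) : ℕ)) + 1 := by simp; omega
      rw [hx2, mem_wordS_odd, LRval_permOf hS]
      simp only [Vset, Finset.mem_filter, Finset.mem_univ, true_and]
      rw [not_not]
  · constructor
    · intro hc
      exact absurd (Finset.mem_range.1 (wordS_subset _ hc)) hx
    · intro hc
      exact absurd (Finset.mem_range.1 (hS.1 hc)) hx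

lemma dec_nonLR {π : Equiv.Perm (Fin n)} (hav : Avoids123 π) {u p : Fin n}
    (hu : u ∉ LRpos π) (hup : u < p) : π p < π u := by
  by_contra hc
  rw [not_lt] at hc
  have hne : π u ≠ π p := fun h => absurd (π.injective h) (ne_of_lt hup)
  have hlt : π u < π p := lt_of_le_of_ne hc hne
  obtain ⟨r, hr, hv⟩ := not_mem_LRpos hu
  exact hav ⟨r, u, p, hr, hup, hv, hlt⟩

lemma permOf_wordS {π : Equiv.Perm (Fin n)} (hav : Avoids123 π) :
    permOf (wordS π) (wordS_isDyck π) = π := by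
  have hP : Pset n (wordS π) = LRpos π := by
    ext p
    simp only [Pset, Finset.mem_filter, Finset.mem_univ, true_and]
    exact mem_wordS_even π p
  have hV : Vset n (wordS π) = LRval π := by
    ext v
    simp only [Vset, Finset.mem_filter, Finset.mem_univ, true_and]
    rw [mem_wordS_odd π v, not_not]
  apply Equiv.ext
  intro p
  rw [permOf_apply]
  by_cases hp : p ∈ Pset n (wordS π)
  · rw [permF, dif_pos hp]
    have hpLR : p ∈ LRpos π := hP ▸ hp
    apply eq_dsc
    · rw [hV]
      exact Finset.mem_image.2 ⟨p, hpLR, rfl⟩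
    · have hset : (Vset n (wordS π)).filter (fun y => π p ≤ y)
          = ((LRpos π).filter (· ≤ p)).image π := by
        rw [hV]
        ext v
        simp only [Finset.mem_filter, Finset.mem_image]
        constructor
        · rintro ⟨hvV, hpv⟩
          rcases Finset.mem_image.1 hvV with ⟨u, hu, rfl⟩
          refine ⟨u, ⟨hu, ?_⟩, rfl⟩
          by_contra hc
          rw [not_le] at hc
          exact absurd (mem_LRpos_lt hu hc) (not_lt.2 hpv)
        · rintro ⟨u, ⟨huLR, hup⟩, rfl⟩
          refine ⟨Finset.mem_image.2 ⟨u, huLR, rfl⟩, ?_⟩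
          rcases lt_or_eq_of_le hup with h | h
          · exact (mem_LRpos_lt hpLR h).le
          · rw [h]
      rw [hset, Finset.card_image_of_injective _ π.injective]
      have hins : (LRpos π).filter (· ≤ p) = insert p ((LRpos π).filter (· < p)) := by
        ext x
        simp only [Finset.mem_filter, Finset.mem_insert]
        constructor
        · rintro ⟨hx1, hx2⟩
          rcases lt_or_eq_of_le hx2 with h | h
          · exact Or.inr ⟨hx1, h⟩
          · exact Or.inl h
        · rintro (rfl | ⟨hx1, hx2⟩)
          · exact ⟨hpLR, le_refl _⟩
          · exact ⟨hx1, hx2.le⟩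
      rw [hins, Finset.card_insert_of_notMem (by
        intro hc
        exact absurd (Finset.mem_filter.1 hc).2 (lt_irrefl _)), hP]
  · rw [permF, dif_neg hp]
    have hpLR : p ∉ LRpos π := fun hc => hp (hP ▸ hc)
    apply eq_dsc
    · rw [hV]
      rw [Finset.mem_sdiff]
      refine ⟨Finset.mem_univ _, ?_⟩
      intro hc
      rcases Finset.mem_image.1 hc with ⟨u, hu, huv⟩
      exact hpLR (π.injective huv ▸ hu)
    · have hset : (Finset.univ \ Vset n (wordS π)).filter (fun y => π p ≤ y)
          = ((Finset.univ \ LRpos π).filter (· ≤ p)).image π := by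
        rw [hV]
        ext w
        simp only [Finset.mem_filter, Finset.mem_image, Finset.mem_sdiff, Finset.mem_univ, true_and]
        constructor
        · rintro ⟨hwV, hpw⟩
          refine ⟨π⁻¹ w, ⟨?_, ?_⟩, by simp⟩
          · intro hc
            exact hwV (Finset.mem_image.2 ⟨π⁻¹ w, hc, by simp⟩)
          · by_contra hc
            rw [not_le] at hc
            have hu : π⁻¹ w ∉ LRpos π := by
              intro hcc
              exact hwV (Finset.mem_image.2 ⟨π⁻¹ w, hcc, by simp⟩)
            have := dec_nonLR hav hpLR hc
            rw [(show ∀ (σ : Equiv.Perm (Fin n)) x, σ (σ⁻¹ x) = x from fun σ => σ.apply_symm_apply)] at this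
            exact absurd this (not_lt.2 hpw)
        · rintro ⟨u, ⟨huLR, hup⟩, rfl⟩
          constructor
          · intro hc
            rcases Finset.mem_image.1 hc with ⟨u', hu', hueq⟩
            exact huLR (π.injective hueq ▸ hu')
          · rcases lt_or_eq_of_le hup with h | h
            · exact (dec_nonLR hav huLR h).le
            · rw [h]
      rw [hset, Finset.card_image_of_injective _ π.injective]
      have hins : (Finset.univ \ LRpos π).filter (· ≤ p)
          = insert p ((Finset.univ \ LRpos π).filter (· < p)) := by
        ext x
        simp only [Finset.mem_filter, Finset.mem_insert, Finset.mem_sdiff, Finset.mem_univ, true_and]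
        constructor
        · rintro ⟨hx1, hx2⟩
          rcases lt_or_eq_of_le hx2 with h | h
          · exact Or.inr ⟨hx1, h⟩
          · exact Or.inl h
        · rintro (rfl | ⟨hx1, hx2⟩)
          · exact ⟨hpLR, le_refl _⟩
          · exact ⟨hx1, hx2.le⟩
      rw [hins, Finset.card_insert_of_notMem (by
        intro hc
        exact absurd (Finset.mem_filter.1 hc).2 (lt_irrefl _)), hP]

end Reconstruct2

section Final

variable {n : ℕ}

/-- the forced-letter positions determined by the ascent sets -/
def Qset (n : ℕ) (A B : Finset ℕ) : Finset ℕ :=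
  (B.image (fun b => 2 * (b - 1))) ∪ (A.image (fun a => 2 * (n - 1 - a) + 1))

variable {A B : Finset ℕ}

lemma Qset_mem_iff {q : ℕ} :
    q ∈ Qset n A B ↔ (∃ b ∈ B, q = 2 * (b - 1)) ∨ (∃ a ∈ A, q = 2 * (n - 1 - a) + 1) := by
  rw [Qset, Finset.mem_union, Finset.mem_image, Finset.mem_image]
  constructor
  · rintro (⟨b, hb, rfl⟩ | ⟨a, ha, rfl⟩)
    · exact Or.inl ⟨b, hb, rfl⟩
    · exact Or.inr ⟨a, ha, rfl⟩
  · rintro (⟨b, hb, rfl⟩ | ⟨a, ha, rfl⟩)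
    · exact Or.inl ⟨b, hb, rfl⟩
    · exact Or.inr ⟨a, ha, rfl⟩

section WithHyp

variable (hA : A ⊆ Finset.Icc 1 (n - 1)) (hB : B ⊆ Finset.Icc 1 (n - 1))
variable (hAsparse : ∀ a ∈ A, a + 1 ∉ A) (hBsparse : ∀ b ∈ B, b + 1 ∉ B)

include hB in
lemma memB_bounds {b : ℕ} (hb : b ∈ B) : 1 ≤ b ∧ b < n := by
  have := Finset.mem_Icc.1 (hB hb)
  omega

include hA in
lemma memA_bounds {a : ℕ} (ha : a ∈ A) : 1 ≤ a ∧ a < n := by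
  have := Finset.mem_Icc.1 (hA ha)
  omega

include hA hB in
lemma Qset_sub : ∀ q ∈ Qset n A B, q + 2 < 2 * n := by
  intro q hq
  rcases Qset_mem_iff.1 hq with ⟨b, hb, rfl⟩ | ⟨a, ha, rfl⟩
  · have := Finset.mem_Icc.1 (hB hb)
    omega
  · have := Finset.mem_Icc.1 (hA ha)
    omega

include hA hB hAsparse hBsparse in
lemma Qset_sep : ∀ q ∈ Qset n A B, q + 2 ∉ Qset n A B := by
  intro q hq hq2
  rcases Qset_mem_iff.1 hq with ⟨b, hb, rfl⟩ | ⟨a, ha, rfl⟩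
  · have hbb := Finset.mem_Icc.1 (hB hb)
    rcases Qset_mem_iff.1 hq2 with ⟨b', hb', heq⟩ | ⟨a', ha', heq⟩
    · have hbb' := Finset.mem_Icc.1 (hB hb')
      have : b' = b + 1 := by omega
      exact hBsparse b hb (this ▸ hb')
    · have haa' := Finset.mem_Icc.1 (hA ha')
      omega
  · have haa := Finset.mem_Icc.1 (hA ha)
    rcases Qset_mem_iff.1 hq2 with ⟨b', hb', heq⟩ | ⟨a', ha', heq⟩
    · have hbb' := Finset.mem_Icc.1 (hB hb')
      omega
    · have haa' := Finset.mem_Icc.1 (hA ha')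
      have : a = a' + 1 := by omega
      exact hAsparse a' ha' (this ▸ ha)

include hA hB in
lemma Qset_card : (Qset n A B).card = A.card + B.card := by
  rw [Qset, Finset.card_union_of_disjoint]
  · rw [Finset.card_image_of_injOn, Finset.card_image_of_injOn]
    · omega
    · intro a ha a' ha' heq
      have heq' : 2 * (n - 1 - a) + 1 = 2 * (n - 1 - a') + 1 := heq
      have h1 := Finset.mem_Icc.1 (hA ha)
      have h2 := Finset.mem_Icc.1 (hA ha')
      omega
    · intro b hb b' hb' heq
      have heq' : 2 * (b - 1) = 2 * (b' - 1) := heq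
      have h1 := Finset.mem_Icc.1 (hB hb)
      have h2 := Finset.mem_Icc.1 (hB hb')
      omega
  · rw [Finset.disjoint_right]
    rintro x hx hx'
    rcases Finset.mem_image.1 hx with ⟨a, ha, rfl⟩
    rcases Finset.mem_image.1 hx' with ⟨b, hb, heq⟩
    have heq' : 2 * (b - 1) = 2 * (n - 1 - a) + 1 := heq
    omega

include hA hB in
/-- the equivalence between constrained `123`-avoiding permutations and constrained words -/
noncomputable def permWordEquiv :
    {π : Equiv.Perm (Fin n) // Avoids123 π ∧ (∀ b ∈ B, IsAscentAt π b)
      ∧ (∀ a ∈ A, IsAscentAt π⁻¹ a)}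
    ≃ {S : Finset ℕ // IsDyckS n S ∧ Qset n A B ⊆ S ∧ ∀ q ∈ Qset n A B, q + 2 ∉ S} where
  toFun := fun ⟨π, hav, hBa, hAa⟩ => ⟨wordS π, wordS_isDyck π, by
      intro q hq
      rcases Qset_mem_iff.1 hq with ⟨b, hb, rfl⟩ | ⟨a, ha, rfl⟩
      · obtain ⟨hb1, hb2⟩ := memB_bounds hB hb
        exact ((ascentB_iff_word hav hb1 hb2).1 (hBa b hb)).1
      · obtain ⟨ha1, ha2⟩ := memA_bounds hA ha
        exact ((ascentA_iff_word hav ha1 ha2).1 (hAa a ha)).1, by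
      intro q hq
      rcases Qset_mem_iff.1 hq with ⟨b, hb, rfl⟩ | ⟨a, ha, rfl⟩
      · obtain ⟨hb1, hb2⟩ := memB_bounds hB hb
        exact ((ascentB_iff_word hav hb1 hb2).1 (hBa b hb)).2
      · obtain ⟨ha1, ha2⟩ := memA_bounds hA ha
        exact ((ascentA_iff_word hav ha1 ha2).1 (hAa a ha)).2⟩
  invFun := fun ⟨S, hS, hQS, hQ2S⟩ => ⟨permOf S hS, avoids_permOf hS, by
      intro b hb
      obtain ⟨hb1, hb2⟩ := memB_bounds hB hb
      rw [ascentB_iff_word (avoids_permOf hS) hb1 hb2, wordS_permOf hS]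
      exact ⟨hQS (Qset_mem_iff.2 (Or.inl ⟨b, hb, rfl⟩)),
        hQ2S _ (Qset_mem_iff.2 (Or.inl ⟨b, hb, rfl⟩))⟩, by
      intro a ha
      obtain ⟨ha1, ha2⟩ := memA_bounds hA ha
      rw [ascentA_iff_word (avoids_permOf hS) ha1 ha2, wordS_permOf hS]
      exact ⟨hQS (Qset_mem_iff.2 (Or.inr ⟨a, ha, rfl⟩)),
        hQ2S _ (Qset_mem_iff.2 (Or.inr ⟨a, ha, rfl⟩))⟩⟩
  left_inv := by
    rintro ⟨π, hav, hBa, hAa⟩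
    apply Subtype.ext
    exact permOf_wordS hav
  right_inv := by
    rintro ⟨S, hS, hQS, hQ2S⟩
    apply Subtype.ext
    exact wordS_permOf hS

end WithHyp

end Final

/-- For sparse subsets `A, B ⊆ [n-1]`, the number of `123`-avoiding permutations `π`
of `[n]` with `B ⊆ Asc(π)` and `A ⊆ Asc(π⁻¹)` equals the Catalan number
`C_{n - |A| - |B|}`. -/
theorem stmt_11 (n : ℕ) (A B : Finset ℕ)
    (hA : A ⊆ Finset.Icc 1 (n - 1)) (hB : B ⊆ Finset.Icc 1 (n - 1))
    (hAsparse : ∀ a ∈ A, a + 1 ∉ A) (hBsparse : ∀ b ∈ B, b + 1 ∉ B) :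
    {π : Equiv.Perm (Fin n) | Avoids123 π ∧ (∀ b ∈ B, IsAscentAt π b) ∧
        (∀ a ∈ A, IsAscentAt π⁻¹ a)}.ncard =
      catalan (n - A.card - B.card) := by
  classical
  have hQ2 := Qset_sub (n := n) (A := A) (B := B) hA hB
  have hQsep := Qset_sep (n := n) (A := A) (B := B) hA hB hAsparse hBsparse
  have hQcard := Qset_card (n := n) (A := A) (B := B) hA hB
  have h1 : {π : Equiv.Perm (Fin n) | Avoids123 π ∧ (∀ b ∈ B, IsAscentAt π b) ∧
      (∀ a ∈ A, IsAscentAt π⁻¹ a)}.ncard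
      = Nat.card {π : Equiv.Perm (Fin n) // Avoids123 π ∧ (∀ b ∈ B, IsAscentAt π b)
        ∧ (∀ a ∈ A, IsAscentAt π⁻¹ a)} := by
    rw [← Nat.card_coe_set_eq]
    rfl
  rw [h1, Nat.card_congr (permWordEquiv hA hB),
    Nat.card_congr (contractEquiv hQ2 hQsep),
    Nat.card_congr (equivDyck (n - (Qset n A B).card)),
    Nat.card_eq_fintype_card, DyckWord.card_dyckWord_semilength_eq_catalan]
  congr 1
  omega
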